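/- arXiv:2502.00269 — 6 statements merged into one kernel-verified Lean document; each statement's English description precedes it below -/
import Mathlib

section
/- For integers 1 ≤ m ≤ n, the number of (m,n)-parking functions equals (n-m+1)·(n+1)^{m-1}. That is, the number of tuples α = (a_1,…,a_m) ∈ {1,…,n}^m whose nondecreasing rearrangement (b_1,…,b_m) satisfies b_i ≤ n-m+i for all i ∈ {1,…,m} is exactly (n-m+1)·(n+1)^{m-1}. -/
open Finset

namespace PF

section Cycle

variable (n : ℕ) {m : ℕ} (g : Fin m → ZMod (n+1))

/-- number of cars preferring spot `c % (n+1)` (0-based, circular with n+1 spots) -/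
def hh (c : ℕ) : ℕ := #(univ.filter fun i => (g i).val = c % (n+1))

/-- cumulative count -/
def A (x : ℕ) : ℕ := ∑ c ∈ range x, hh n g c

/-- drifted walk -/
def C (x : ℕ) : ℤ := (A n g x : ℤ) - x

lemma hh_period (x : ℕ) : hh n g (x + (n+1)) = hh n g x := by
  unfold hh; simp [Nat.add_mod_right]

lemma sum_hh : ∑ c ∈ range (n+1), hh n g c = m := by
  have h1 : (univ : Finset (Fin m)).card = ∑ c ∈ range (n+1), #(univ.filter fun i => (g i).val = c) := by
    apply Finset.card_eq_sum_card_fiberwise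
    intro i _
    exact Finset.mem_range.2 ((g i).val_lt)
  rw [Finset.card_univ, Fintype.card_fin] at h1
  have h2 : ∑ c ∈ range (n+1), hh n g c
      = ∑ c ∈ range (n+1), #(univ.filter fun i => (g i).val = c) :=
    Finset.sum_congr rfl fun c hc => by
      unfold hh
      rw [Nat.mod_eq_of_lt (Finset.mem_range.1 hc)]
  rw [h2, ← h1]

lemma A_period (x : ℕ) : A n g (x + (n+1)) = A n g x + m := by
  induction x with
  | zero => simp [A, sum_hh]
  | succ x ih =>
    have : x + 1 + (n+1) = (x + (n+1)) + 1 := by ring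
    rw [this]
    unfold A at *
    rw [Finset.sum_range_succ, Finset.sum_range_succ, ih, hh_period]
    ring

lemma C_zero : C n g 0 = 0 := by simp [C, A]

lemma C_succ (x : ℕ) : C n g (x+1) = C n g x + (hh n g x : ℤ) - 1 := by
  unfold C A
  rw [Finset.sum_range_succ]
  push_cast
  ring

lemma C_step (x : ℕ) : C n g x - 1 ≤ C n g (x+1) := by
  rw [C_succ]
  have : (0:ℤ) ≤ hh n g x := Int.natCast_nonneg _
  linarith

lemma C_period (x : ℕ) : C n g (x + (n+1)) = C n g x - ((n+1 : ℤ) - m) := by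
  unfold C
  rw [A_period]
  push_cast
  ring


/-- number of cars parking (circularly) in window `[s, s+t)` -/
def cnt (s t : ℕ) : ℕ := #(univ.filter fun i => ((g i) - (s : ZMod (n+1))).val < t)

lemma val_eq_iff (s t : ℕ) (ht : t < n + 1) (i : Fin m) :
    ((g i) - (s : ZMod (n+1))).val = t ↔ (g i).val = (s + t) % (n+1) := by
  constructor
  · intro h
    have h2 : (g i) - (s : ZMod (n+1)) = (t : ZMod (n+1)) := by
      apply ZMod.val_injective
      rw [h, ZMod.val_cast_of_lt ht]
    have h3 : g i = ((s + t : ℕ) : ZMod (n+1)) := by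
      push_cast
      rw [← h2]; ring
    rw [h3, ZMod.val_natCast]
  · intro h
    have h3 : g i = ((s + t : ℕ) : ZMod (n+1)) := by
      apply ZMod.val_injective
      rw [h, ZMod.val_natCast]
    have h2 : (g i) - (s : ZMod (n+1)) = (t : ZMod (n+1)) := by
      rw [h3]; push_cast; ring
    rw [h2, ZMod.val_cast_of_lt ht]

lemma cnt_succ (s t : ℕ) (ht : t < n + 1) :
    cnt n g s (t+1) = cnt n g s t + hh n g (s + t) := by
  unfold cnt hh
  have hsplit : (univ.filter fun i => ((g i) - (s : ZMod (n+1))).val < t + 1)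
      = (univ.filter fun i => ((g i) - (s : ZMod (n+1))).val < t)
        ∪ (univ.filter fun i => (g i).val = (s + t) % (n+1)) := by
    ext i
    simp only [Finset.mem_union, Finset.mem_filter, Finset.mem_univ, true_and]
    rw [Nat.lt_succ_iff_lt_or_eq, val_eq_iff n g s t ht i]
  rw [hsplit, Finset.card_union_of_disjoint]
  refine Finset.disjoint_left.2 fun i hi hi' => ?_
  simp only [Finset.mem_filter, Finset.mem_univ, true_and] at hi hi'
  rw [← val_eq_iff n g s t ht i] at hi'
  omega

lemma cnt_eq (s : ℕ) : ∀ t ≤ n + 1, A n g s + cnt n g s t = A n g (s + t) := by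
  intro t
  induction t with
  | zero => intro _; simp [cnt, A]
  | succ t ih =>
    intro ht
    have ht' : t < n + 1 := by omega
    rw [cnt_succ n g s t ht']
    have : s + (t+1) = (s + t) + 1 := by ring
    rw [this]
    unfold A at *
    rw [Finset.sum_range_succ, ← ih (le_of_lt ht')]
    ring

def goodZ (s : ZMod (n+1)) : Prop :=
  ∀ t ≤ n, #(univ.filter fun i => t ≤ ((g i) - s).val) + t ≤ n

/-- strict record low of the walk -/
def isRec (y : ℕ) : Prop := ∀ x < y, C n g y < C n g x

instance (s : ZMod (n+1)) : Decidable (goodZ n g s) := by unfold goodZ; infer_instance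
instance (y : ℕ) : Decidable (isRec n g y) := by unfold isRec; infer_instance

lemma cnt_le (s t : ℕ) : cnt n g s t ≤ m := by
  unfold cnt
  exact le_trans (Finset.card_filter_le _ _) (by simp)

lemma geCard_add_cnt (s t : ℕ) :
    #(univ.filter fun i => t ≤ ((g i) - (s : ZMod (n+1))).val) + cnt n g s t = m := by
  unfold cnt
  have := Finset.card_filter_add_card_filter_not
    (s := (univ : Finset (Fin m))) (p := fun i => ((g i) - (s : ZMod (n+1))).val < t)
  simp only [not_lt, Finset.card_univ, Fintype.card_fin] at this
  omega

lemma goodZ_iff_window (s : ℕ) :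
    goodZ n g (s : ZMod (n+1)) ↔ ∀ t ≤ n, C n g s - C n g (s + t) ≤ ((n+1:ℤ) - m) - 1 := by
  unfold goodZ
  apply forall₂_congr
  intro t ht
  have hc := cnt_eq n g s t (by omega)
  have hg := geCard_add_cnt n g s t
  have hcl := cnt_le n g s t
  unfold C
  rw [← hc]
  push_cast
  omega

lemma goodZ_iff_isRec (hmn : m ≤ n) (s : ℕ) (hs : s < n + 1) :
    goodZ n g (s : ZMod (n+1)) ↔ isRec n g (s + (n+1)) := by
  rw [goodZ_iff_window]
  have hper := C_period n g s
  constructor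
  · intro H x hx
    rcases le_or_gt s x with hsx | hsx
    · have ht : x - s ≤ n := by omega
      have := H (x - s) ht
      have hxe : s + (x - s) = x := by omega
      rw [hxe] at this
      omega
    · -- x < s : use x + (n+1) ∈ [s, s+n]
      have ht : x + (n+1) - s ≤ n := by omega
      have := H (x + (n+1) - s) ht
      have hxe : s + (x + (n+1) - s) = x + (n+1) := by omega
      rw [hxe] at this
      have hper' := C_period n g x
      have hm' : (1:ℤ) ≤ (n+1:ℤ) - m := by
        have : (m:ℤ) ≤ n := by exact_mod_cast hmn
        linarith
      omega
  · intro H t ht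
    have := H (s + t) (by omega)
    omega

/-- running minimum of `C` over `[0, T]` -/
def M : ℕ → ℤ
  | 0 => 0
  | T+1 => min (M T) (C n g (T+1))

lemma M_le : ∀ T, ∀ x ≤ T, M n g T ≤ C n g x := by
  intro T
  induction T with
  | zero =>
    intro x hx
    interval_cases x
    rw [C_zero]; rfl
  | succ T ih =>
    intro x hx
    rcases Nat.lt_succ_iff_lt_or_eq.1 (Nat.lt_succ_of_le hx) with h | h
    · exact le_trans (min_le_left _ _) (ih x (by omega))
    · rw [h]; exact min_le_right _ _

lemma M_mem : ∀ T, ∃ x ≤ T, M n g T = C n g x := by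
  intro T
  induction T with
  | zero => exact ⟨0, le_refl _, (C_zero n g).symm⟩
  | succ T ih =>
    rcases ih with ⟨x, hx, hMx⟩
    rcases le_or_gt (M n g T) (C n g (T+1)) with h | h
    · exact ⟨x, by omega, by rw [show M n g (T+1) = min (M n g T) (C n g (T+1)) from rfl, min_eq_left h, hMx]⟩
    · exact ⟨T+1, le_refl _, by rw [show M n g (T+1) = min (M n g T) (C n g (T+1)) from rfl, min_eq_right (le_of_lt h)]⟩

lemma isRec_succ_iff (T : ℕ) : isRec n g (T+1) ↔ C n g (T+1) < M n g T := by
  constructor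
  · intro H
    rcases M_mem n g T with ⟨x, hx, hMx⟩
    rw [hMx]
    exact H x (by omega)
  · intro H x hx
    exact lt_of_lt_of_le H (M_le n g T x (by omega))

/-- number of records below `T` -/
def recs (T : ℕ) : ℕ := #((range T).filter (isRec n g))

lemma recs_cast (T : ℕ) : (recs n g (T+1) : ℤ) = 1 - M n g T := by
  induction T with
  | zero =>
    have h0 : isRec n g 0 := fun x hx => absurd hx (Nat.not_lt_zero x)
    have : recs n g 1 = 1 := by
      unfold recs
      rw [Finset.range_one, Finset.filter_singleton, if_pos h0, Finset.card_singleton]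
    rw [this]
    simp [M]
  | succ T ih =>
    have hsplit : recs n g (T+2) = recs n g (T+1) + (if isRec n g (T+1) then 1 else 0) := by
      unfold recs
      rw [Finset.range_add_one, Finset.filter_insert]
      split
      · rw [Finset.card_insert_of_notMem (by simp)]
      · omega
    have hstep := C_step n g T
    have hCT := M_le n g T T (le_refl _)
    have hMsucc : M n g (T+1) = min (M n g T) (C n g (T+1)) := rfl
    rcases (em (isRec n g (T+1))) with hr | hr
    · have hlt := (isRec_succ_iff n g T).1 hr
      have hCeq : C n g (T+1) = M n g T - 1 := by omega
      rw [hsplit, if_pos hr, hMsucc, hCeq, min_eq_right (by omega)]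
      push_cast
      omega
    · have hge : ¬ C n g (T+1) < M n g T := fun h => hr ((isRec_succ_iff n g T).2 h)
      rw [hsplit, if_neg hr, hMsucc, min_eq_left (by omega)]
      push_cast
      omega

lemma M_shift (hmn : m ≤ n) : M n g (2*n+1) = M n g n - ((n+1:ℤ) - m) := by
  set m' : ℤ := (n+1:ℤ) - m with hm'
  have hm'pos : 0 < m' := by
    have : (m:ℤ) ≤ n := by exact_mod_cast hmn
    simp only [hm']; linarith
  have hub : ∀ x ≤ 2*n+1, M n g n - m' ≤ C n g x := by
    intro x hx
    rcases le_or_gt x n with h | h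
    · have := M_le n g n x h
      omega
    · have hx' : x = (x - (n+1)) + (n+1) := by omega
      have hper := C_period n g (x - (n+1))
      have := M_le n g n (x - (n+1)) (by omega)
      rw [hx', hper]
      omega
  have hle : M n g (2*n+1) ≤ M n g n - m' := by
    rcases M_mem n g n with ⟨x, hx, hMx⟩
    have hper := C_period n g x
    have := M_le n g (2*n+1) (x + (n+1)) (by omega)
    omega
  have hge : M n g n - m' ≤ M n g (2*n+1) := by
    rcases M_mem n g (2*n+1) with ⟨x, hx, hMx⟩
    have := hub x hx
    omega
  omega

lemma count_window (hmn : m ≤ n) :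
    #((range (n+1)).filter fun s => isRec n g (s + (n+1))) = n + 1 - m := by
  have hbij : #((range (n+1)).filter fun s => isRec n g (s + (n+1)))
      = #((Ico (n+1) (2*(n+1))).filter (isRec n g)) := by
    apply Finset.card_bij' (fun s _ => s + (n+1)) (fun y _ => y - (n+1))
    · intro s hs
      simp only [Finset.mem_filter, Finset.mem_range] at hs
      simp only [Finset.mem_filter, Finset.mem_Ico]
      exact ⟨⟨by omega, by omega⟩, hs.2⟩
    · intro y hy
      simp only [Finset.mem_filter, Finset.mem_Ico] at hy
      simp only [Finset.mem_filter, Finset.mem_range]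
      constructor
      · omega
      · have : y - (n+1) + (n+1) = y := by omega
        rw [this]
        exact hy.2
    · intro s _; omega
    · intro y hy
      simp only [Finset.mem_filter, Finset.mem_Ico] at hy
      omega
  have hsplit : recs n g (2*(n+1)) = recs n g (n+1) + #((Ico (n+1) (2*(n+1))).filter (isRec n g)) := by
    unfold recs
    rw [Finset.range_eq_Ico, ← Finset.Ico_union_Ico_eq_Ico (Nat.zero_le (n+1)) (by omega),
      Finset.filter_union, Finset.card_union_of_disjoint, ← Finset.range_eq_Ico]
    exact Finset.disjoint_filter_filter (Finset.Ico_disjoint_Ico_consecutive 0 (n+1) (2*(n+1)))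
  have h1 : (recs n g (n+1) : ℤ) = 1 - M n g n := recs_cast n g n
  have h2 : (recs n g (2*(n+1)) : ℤ) = 1 - M n g (2*n+1) := by
    have : 2*(n+1) = (2*n+1)+1 := by ring
    rw [this]
    exact recs_cast n g (2*n+1)
  have h3 := M_shift n g hmn
  have hm : (m:ℤ) ≤ n := by exact_mod_cast hmn
  rw [hbij]
  omega

lemma card_goodZ (hmn : m ≤ n) :
    Nat.card {s : ZMod (n+1) // goodZ n g s} = n + 1 - m := by
  rw [Nat.card_eq_fintype_card, Fintype.card_subtype]
  have hbij : #(univ.filter fun s : ZMod (n+1) => goodZ n g s)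
      = #((range (n+1)).filter fun s : ℕ => goodZ n g (s : ZMod (n+1))) := by
    apply Finset.card_nbij' (fun z => z.val) (fun s => ((s : ℕ) : ZMod (n+1)))
    · intro z hz
      simp only [Finset.mem_coe, Finset.mem_filter, Finset.mem_univ, true_and] at hz
      simp only [Finset.mem_coe, Finset.mem_filter, Finset.mem_range]
      refine ⟨z.val_lt, ?_⟩
      rwa [ZMod.natCast_rightInverse z]
    · intro s hs
      simp only [Finset.mem_coe, Finset.mem_filter, Finset.mem_range] at hs
      simp only [Finset.mem_coe, Finset.mem_filter, Finset.mem_univ, true_and]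
      exact hs.2
    · intro z _
      exact ZMod.natCast_rightInverse z
    · intro s hs
      simp only [Finset.mem_coe, Finset.mem_filter, Finset.mem_range] at hs
      show ((s : ZMod (n+1))).val = s
      rw [ZMod.val_natCast, Nat.mod_eq_of_lt hs.1]
  rw [hbij, ← count_window n g hmn]
  congr 1
  apply Finset.filter_congr
  intro s hs
  simp only [Finset.mem_range] at hs
  exact goodZ_iff_isRec n g hmn s hs

end Cycle

variable {m : ℕ}

lemma card_filter_perm (σ : Equiv.Perm (Fin m)) (p : Fin m → Prop) [DecidablePred p] :
    #(univ.filter fun i => p (σ i)) = #(univ.filter p) :=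
  Finset.card_nbij' (fun i => σ i) (fun j => σ.symm j) (by intro i hi; simpa using hi)
    (by intro j hj; simpa using hj) (by intro i _; simp) (by intro j _; simp)

theorem sort_iff (hmn : m ≤ n) (a : Fin m → Fin n) :
    (∃ σ : Equiv.Perm (Fin m),
        Monotone (fun i => a (σ i)) ∧
        ∀ i : Fin m, (a (σ i) : ℕ) + 1 ≤ n - m + ((i : ℕ) + 1)) ↔
    (∀ t ≤ n, #(univ.filter fun i => t ≤ (a i : ℕ)) + t ≤ n) := by
  constructor
  · rintro ⟨σ, hmono, hbd⟩ t ht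
    rw [← card_filter_perm σ (fun i => t ≤ (a i : ℕ))]
    by_contra hcon
    push_neg at hcon
    set S := univ.filter fun i => t ≤ (a (σ i) : ℕ) with hS
    have hSne : S.Nonempty := by
      rw [← Finset.card_pos]; omega
    set i₀ := S.min' hSne with hi₀
    have hi₀S : i₀ ∈ S := S.min'_mem hSne
    have hsub : S ⊆ Finset.Ici i₀ := fun j hj => Finset.mem_Ici.2 (S.min'_le j hj)
    have hcard : #S ≤ m - (i₀ : ℕ) := by
      calc #S ≤ #(Finset.Ici i₀) := Finset.card_le_card hsub
      _ = m - (i₀ : ℕ) := Fin.card_Ici i₀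
    have ht₀ : t ≤ (a (σ i₀) : ℕ) := (Finset.mem_filter.1 hi₀S).2
    have hb := hbd i₀
    have hiv : (i₀ : ℕ) < m := i₀.isLt
    omega
  · intro H
    refine ⟨Tuple.sort a, Tuple.monotone_sort a, ?_⟩
    intro i
    by_contra hcon
    push_neg at hcon
    set σ := Tuple.sort a with hσ
    set t := n - m + ((i : ℕ) + 1) with hT
    have hta : t ≤ (a (σ i) : ℕ) := by omega
    have htn : t ≤ n := le_trans hta (by omega)
    have hmem : Finset.Ici i ⊆ univ.filter fun j => t ≤ (a (σ j) : ℕ) := by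
      intro j hj
      rw [Finset.mem_filter]
      exact ⟨Finset.mem_univ j, le_trans hta (Tuple.monotone_sort a (Finset.mem_Ici.1 hj))⟩
    have hcard : m - (i : ℕ) ≤ #(univ.filter fun j => t ≤ (a (σ j) : ℕ)) := by
      rw [← Fin.card_Ici i]
      exact Finset.card_le_card hmem
    rw [card_filter_perm σ (fun j => t ≤ (a j : ℕ))] at hcard
    have := H t htn
    have hiv : (i : ℕ) < m := i.isLt
    omega

def P (m n : ℕ) (a : Fin m → Fin n) : Prop :=
  ∀ t ≤ n, #(univ.filter fun i => t ≤ (a i : ℕ)) + t ≤ n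

lemma good_val_lt {n : ℕ} (g : Fin m → ZMod (n+1)) (s : ZMod (n+1)) (h : goodZ n g s) (i : Fin m) :
    ((g i) - s).val < n := by
  have h1 := h n (le_refl n)
  have h2 : #(univ.filter fun i => n ≤ ((g i) - s).val) = 0 := by omega
  rw [Finset.card_eq_zero] at h2
  by_contra hcon
  push_neg at hcon
  have : i ∈ univ.filter fun i => n ≤ ((g i) - s).val :=
    Finset.mem_filter.2 ⟨Finset.mem_univ i, hcon⟩
  rw [h2] at this
  exact absurd this (Finset.notMem_empty i)

/-- Pollak's bijection -/
def pollak {n : ℕ} :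
    {p : (Fin m → ZMod (n+1)) × ZMod (n+1) // goodZ n p.1 p.2} ≃
      {a : Fin m → Fin n // P m n a} × ZMod (n+1) where
  toFun p := (⟨fun i => ⟨((p.1.1 i) - p.1.2).val, good_val_lt p.1.1 p.1.2 p.2 i⟩,
    fun t ht => p.2 t ht⟩, p.1.2)
  invFun q := ⟨((fun i => (((q.1.1 i : ℕ) : ZMod (n+1)) + q.2)), q.2), by
    intro t ht
    have hv : ∀ i : Fin m, ((((q.1.1 i : ℕ) : ZMod (n+1)) + q.2) - q.2).val = (q.1.1 i : ℕ) := by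
      intro i
      rw [add_sub_cancel_right, ZMod.val_cast_of_lt (by omega : ((q.1.1 i : ℕ)) < n+1)]
    simp only [hv]
    exact q.1.2 t ht⟩
  left_inv p := by
    apply Subtype.ext
    apply Prod.ext
    · funext i
      simp only
      rw [ZMod.natCast_rightInverse ((p.1.1 i) - p.1.2), sub_add_cancel]
    · rfl
  right_inv q := by
    apply Prod.ext
    · apply Subtype.ext
      funext i
      apply Fin.ext
      simp only
      rw [add_sub_cancel_right, ZMod.val_cast_of_lt (by omega : ((q.1.1 i : ℕ)) < n+1)]
    · rfl

lemma card_P {n : ℕ} (hm : 1 ≤ m) (hmn : m ≤ n) :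
    Nat.card {a : Fin m → Fin n // P m n a} = (n - m + 1) * (n + 1) ^ (m - 1) := by
  have key : Nat.card {p : (Fin m → ZMod (n+1)) × ZMod (n+1) // goodZ n p.1 p.2}
      = (n + 1) ^ m * (n + 1 - m) := by
    rw [Nat.card_congr (Equiv.subtypeProdEquivSigmaSubtype (fun g s => goodZ n g s))]
    rw [Nat.card_eq_fintype_card, Fintype.card_sigma]
    have heach : ∀ g : Fin m → ZMod (n+1),
        Fintype.card {s // goodZ n g s} = n + 1 - m := by
      intro g
      rw [← Nat.card_eq_fintype_card]
      exact card_goodZ n g hmn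
    rw [Finset.sum_congr rfl fun g _ => heach g]
    rw [Finset.sum_const, Finset.card_univ, smul_eq_mul]
    congr 1
    rw [Fintype.card_fun, Fintype.card_fin, ZMod.card]
  rw [Nat.card_congr pollak, Nat.card_prod, Nat.card_zmod] at key
  have hpow : (n + 1) ^ m = (n + 1) ^ (m - 1) * (n + 1) := by
    conv_lhs => rw [show m = (m - 1) + 1 by omega]
    rw [pow_succ]
  have : Nat.card {a : Fin m → Fin n // P m n a} * (n+1)
      = ((n - m + 1) * (n + 1) ^ (m - 1)) * (n+1) := by
    rw [key, hpow, show n + 1 - m = n - m + 1 by omega]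
    ring
  exact Nat.eq_of_mul_eq_mul_right (by omega) this

end PF

/-- For integers `1 ≤ m ≤ n`, the number of `(m,n)`-parking functions equals
`(n-m+1)·(n+1)^(m-1)`. Tuples `a : Fin m → Fin n` encode preference lists in `{1,…,n}^m`
via `i ↦ (a i : ℕ) + 1`; the condition says that some rearrangement of the tuple is
nondecreasing and its `i`-th entry (1-indexed value) is at most `n - m + i`. -/
theorem parking_function_count (m n : ℕ) (hm : 1 ≤ m) (hmn : m ≤ n) :
    Nat.card {a : Fin m → Fin n //
      ∃ σ : Equiv.Perm (Fin m),
        Monotone (fun i => a (σ i)) ∧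
        ∀ i : Fin m, (a (σ i) : ℕ) + 1 ≤ n - m + ((i : ℕ) + 1)} =
      (n - m + 1) * (n + 1) ^ (m - 1) := by
  rw [Nat.card_congr (Equiv.subtypeEquivRight fun a => PF.sort_iff hmn a)]
  exact PF.card_P hm hmn
end

section
/- Abel's multinomial identity, first special instance: for every m ≥ 1, every n ≥ 0, and all positive reals x_1,…,x_m, one has A_n(x_1,…,x_m; −1,…,−1) = (x_1⋯x_m)^{-1}·(x_1+⋯+x_m)·(x_1+⋯+x_m+n)^{n-1}, i.e. Σ_{(s_1,…,s_m): s_1+⋯+s_m=n} (n!/(s_1!⋯s_m!))·∏_{j=1}^m (x_j+s_j)^{s_j-1} = (x_1⋯x_m)^{-1}·(x_1+⋯+x_m)·(x_1+⋯+x_m+n)^{n-1}. -/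
open Finset Nat fwdDiff

section AbelAux

lemma fwdDiff_aux_pow (x : ℝ) (n : ℕ) :
    Δ_[(1:ℝ)] (fun t : ℝ => (x + t) ^ n) =
      fun t => ∑ i ∈ Finset.range n, (n.choose i : ℝ) * (x + t) ^ i := by
  funext t
  have h : x + (t + 1) = (x + t) + 1 := by ring
  simp only [fwdDiff, h, add_pow, one_pow, mul_one]
  rw [Finset.sum_range_succ]
  simp [mul_comm]

lemma fwdDiff_iter_pow_eq_zero (x : ℝ) : ∀ m n : ℕ, n < m →
    (Δ_[(1:ℝ)])^[m] (fun t : ℝ => (x + t) ^ n) = 0 := by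
  intro m
  induction m with
  | zero => intro n hn; omega
  | succ m ih =>
    intro n hn
    rw [Function.iterate_succ_apply, fwdDiff_aux_pow]
    have : (fun t => ∑ i ∈ Finset.range n, (n.choose i : ℝ) * (x + t) ^ i)
        = ∑ i ∈ Finset.range n, (n.choose i : ℝ) • (fun t : ℝ => (x + t) ^ i) := by
      funext t; simp [Finset.sum_apply]
    rw [this, fwdDiff_iter_finset_sum]
    apply Finset.sum_eq_zero
    intro i hi
    rw [fwdDiff_iter_const_smul, ih i (by have := Finset.mem_range.mp hi; omega)]
    simp

/-- The key alternating-sum (finite difference) lemma. -/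
lemma alt_sum_pow_eq_zero (x : ℝ) (n m : ℕ) (hnm : n < m) :
    ∑ k ∈ Finset.range (m + 1), (-1 : ℝ) ^ (m - k) * (m.choose k) * (x + k) ^ n = 0 := by
  have h := fwdDiff_iter_eq_sum_shift (1 : ℝ) (fun t : ℝ => (x + t) ^ n) m 0
  rw [fwdDiff_iter_pow_eq_zero x m n hnm] at h
  simp only [Pi.zero_apply, zero_add, nsmul_eq_mul, mul_one, zsmul_eq_mul, Int.cast_mul,
    Int.cast_pow, Int.cast_neg, Int.cast_one, Int.cast_natCast, mul_assoc] at h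
  rw [show (0:ℝ) = ∑ k ∈ Finset.range (m+1), (-1:ℝ)^(m-k) * ((m.choose k : ℝ) * (x + k)^n) from h]
  exact Finset.sum_congr rfl fun k _ => by ring

/-- Abel's binomial identity, case (p,q) = (-1,0). -/
lemma abel_binom_aux (x : ℝ) (hx : 0 < x) : ∀ (n : ℕ) (y : ℝ),
    ∑ k ∈ Finset.range (n + 1),
      (n.choose k : ℝ) * (x + k) ^ ((k : ℤ) - 1) * (y + ((n - k : ℕ) : ℝ)) ^ (n - k)
      = x⁻¹ * (x + y + n) ^ n := by
  intro n
  induction n with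
  | zero =>
    intro y
    simp [zpow_neg, mul_comm]
  | succ n ih =>
    -- define F and show it has derivative 0 everywhere
    set c : ℕ → ℝ := fun k => ((n+1).choose k : ℝ) * (x + k) ^ ((k : ℤ) - 1) with hc
    set F : ℝ → ℝ := fun y =>
      (∑ k ∈ Finset.range (n + 2), c k * (y + ((n + 1 - k : ℕ) : ℝ)) ^ (n + 1 - k))
        - x⁻¹ * (x + y + (n+1 : ℕ)) ^ (n+1) with hF
    have hderiv : ∀ y : ℝ, HasDerivAt F 0 y := by
      intro y
      have h1 : ∀ k ∈ Finset.range (n + 2), HasDerivAt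
          (fun y : ℝ => c k * (y + ((n + 1 - k : ℕ) : ℝ)) ^ (n + 1 - k))
          (c k * ((n + 1 - k : ℕ) * (y + ((n + 1 - k : ℕ) : ℝ)) ^ (n - k))) y := by
        intro k hk
        have hb : HasDerivAt (fun y : ℝ => y + ((n + 1 - k : ℕ) : ℝ)) 1 y :=
          (hasDerivAt_id y).add_const _
        have := (hasDerivAt_pow (n + 1 - k) (y + ((n + 1 - k : ℕ) : ℝ))).comp y hb
        have h2 := this.const_mul (c k)
        refine h2.congr_deriv ?_
        have : n + 1 - k - 1 = n - k := by omega
        rw [this]; ring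
      have hsum := HasDerivAt.fun_sum h1
      have h3 : HasDerivAt (fun y : ℝ => x⁻¹ * (x + y + (n+1 : ℕ)) ^ (n+1))
          (x⁻¹ * ((n+1) * (x + y + (n+1 : ℕ)) ^ n)) y := by
        have hb : HasDerivAt (fun y : ℝ => x + y + ((n+1 : ℕ) : ℝ)) 1 y := by
          simpa using (((hasDerivAt_id y).const_add x).add_const ((n+1 : ℕ) : ℝ))
        have := (hasDerivAt_pow (n+1) (x + y + ((n+1 : ℕ) : ℝ))).comp y hb
        have h4 := this.const_mul x⁻¹
        refine h4.congr_deriv ?_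
        push_cast; ring
      have h5 := hsum.sub h3
      refine h5.congr_deriv ?_
      -- show the derivative is 0 using ih at y + 1
      have key := ih (y + 1)
      -- drop the last (k = n+1) term: its coefficient n+1-k = 0
      rw [Finset.sum_range_succ]
      have hlast : c (n+1) * (((n + 1 - (n+1) : ℕ) : ℝ) * (y + ((n + 1 - (n+1) : ℕ) : ℝ)) ^ (n - (n+1))) = 0 := by
        simp
      rw [hlast, add_zero]
      have hterm : ∀ k ∈ Finset.range (n + 1),
          c k * (((n + 1 - k : ℕ) : ℝ) * (y + ((n + 1 - k : ℕ) : ℝ)) ^ (n - k))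
            = (n+1 : ℝ) * ((n.choose k : ℝ) * (x + k) ^ ((k : ℤ) - 1) * ((y+1) + ((n - k : ℕ) : ℝ)) ^ (n - k)) := by
        intro k hk
        have hk' : k ≤ n := by have := Finset.mem_range.mp hk; omega
        have hchoose : ((n+1).choose k : ℝ) * ((n + 1 - k : ℕ) : ℝ) = (n+1 : ℝ) * (n.choose k : ℝ) := by
          have h := (Nat.choose_mul_succ_eq n k).symm
          have h2 : (((n + 1).choose k * (n + 1 - k) : ℕ) : ℝ) = ((n.choose k * (n + 1) : ℕ) : ℝ) := by
            rw [h]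
          push_cast at h2
          linarith [h2]
        have harg : (y + ((n + 1 - k : ℕ) : ℝ)) = ((y+1) + ((n - k : ℕ) : ℝ)) := by
          have : (n + 1 - k : ℕ) = (n - k) + 1 := by omega
          rw [this]; push_cast; ring
        rw [hc]
        rw [harg]
        linear_combination ((x + (k:ℝ)) ^ ((k:ℤ) - 1) * ((y+1) + ((n - k : ℕ) : ℝ)) ^ (n - k)) * hchoose
      rw [Finset.sum_congr rfl hterm, ← Finset.mul_sum, key]
      push_cast
      ring
    -- F is constant
    have hconst : ∀ y : ℝ, F y = F (-(x + (n+1 : ℕ))) := by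
      intro y
      exact is_const_of_deriv_eq_zero (fun z => (hderiv z).differentiableAt)
        (fun z => (hderiv z).deriv) y _
    -- evaluate at the special point
    have heval : F (-(x + (n+1 : ℕ))) = 0 := by
      simp only [hF]
      have h0 : x + -(x + ((n+1 : ℕ) : ℝ)) + ((n+1 : ℕ) : ℝ) = 0 := by ring
      rw [h0]
      simp only [zero_pow (Nat.succ_ne_zero n), mul_zero, sub_zero]
      have hterm : ∀ k ∈ Finset.range (n + 2),
          c k * (-(x + ((n+1 : ℕ) : ℝ)) + ((n + 1 - k : ℕ) : ℝ)) ^ (n + 1 - k)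
            = (-1 : ℝ) ^ (n + 1 - k) * ((n+1).choose k : ℝ) * (x + k) ^ n := by
        intro k hk
        have hk' : k ≤ n + 1 := by have := Finset.mem_range.mp hk; omega
        have hxk : (0 : ℝ) < x + k := by positivity
        have harg : (-(x + ((n+1 : ℕ) : ℝ)) + ((n + 1 - k : ℕ) : ℝ)) = -(x + k) := by
          rw [Nat.cast_sub hk']; push_cast; ring
        rw [harg, hc, neg_pow]
        have hzp : (x + (k:ℝ)) ^ ((k : ℤ) - 1) * (x + (k:ℝ)) ^ ((n + 1 - k : ℕ)) = (x + (k:ℝ)) ^ n := by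
          rw [← zpow_natCast (x + (k:ℝ)) (n + 1 - k), ← zpow_add₀ (ne_of_gt hxk),
            ← zpow_natCast (x + (k:ℝ)) n]
          congr 1
          rw [Nat.cast_sub hk']
          push_cast
          ring
        calc ((n+1).choose k : ℝ) * (x + ↑k) ^ ((k:ℤ) - 1) * ((-1:ℝ) ^ (n+1-k) * (x + ↑k) ^ (n+1-k))
            = (-1 : ℝ) ^ (n + 1 - k) * ((n+1).choose k : ℝ) *
              ((x + ↑k) ^ ((k:ℤ) - 1) * (x + ↑k) ^ ((n + 1 - k : ℕ))) := by ring
          _ = _ := by rw [hzp]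
      rw [Finset.sum_congr rfl hterm]
      exact alt_sum_pow_eq_zero x n (n+1) (Nat.lt_succ_self n)
    -- conclude
    intro y
    have := hconst y
    rw [heval] at this
    have hFy : F y = 0 := this
    simp only [hF] at hFy
    have := sub_eq_zero.mp hFy
    calc ∑ k ∈ Finset.range (n + 1 + 1),
          ((n+1).choose k : ℝ) * (x + k) ^ ((k : ℤ) - 1) * (y + ((n + 1 - k : ℕ) : ℝ)) ^ (n + 1 - k)
        = ∑ k ∈ Finset.range (n + 2), c k * (y + ((n + 1 - k : ℕ) : ℝ)) ^ (n + 1 - k) := by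
          apply Finset.sum_congr rfl; intro k hk; rw [hc]
      _ = x⁻¹ * (x + y + ((n+1 : ℕ) : ℝ)) ^ (n+1) := this
      _ = x⁻¹ * (x + y + ((n+1 : ℕ) : ℝ)) ^ (n+1) := rfl

/-- Abel's binomial identity, case (p,q) = (-1,-1). -/
lemma abel_binom_neg (x y : ℝ) (hx : 0 < x) (hy : 0 < y) (n : ℕ) :
    ∑ k ∈ Finset.range (n + 1),
      (n.choose k : ℝ) * (x + k) ^ ((k : ℤ) - 1) *
        (y + ((n - k : ℕ) : ℝ)) ^ (((n - k : ℕ) : ℤ) - 1)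
      = (x⁻¹ + y⁻¹) * (x + y + n) ^ ((n : ℤ) - 1) := by
  have hs : (0:ℝ) < x + y + n := by positivity
  set S : ℝ := ∑ k ∈ Finset.range (n + 1),
      (n.choose k : ℝ) * (x + k) ^ ((k : ℤ) - 1) *
        (y + ((n - k : ℕ) : ℝ)) ^ (((n - k : ℕ) : ℤ) - 1) with hS
  have key : (x + y + n) * S = y⁻¹ * (x + y + n) ^ n + x⁻¹ * (x + y + n) ^ n := by
    rw [hS, Finset.mul_sum]
    have hterm : ∀ k ∈ Finset.range (n + 1),
        (x + y + (n:ℝ)) * ((n.choose k : ℝ) * (x + k) ^ ((k : ℤ) - 1) *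
            (y + ((n - k : ℕ) : ℝ)) ^ (((n - k : ℕ) : ℤ) - 1))
        = (n.choose k : ℝ) * (x + k) ^ (k : ℕ) *
            (y + ((n - k : ℕ) : ℝ)) ^ (((n - k : ℕ) : ℤ) - 1)
          + (n.choose k : ℝ) * (x + k) ^ ((k : ℤ) - 1) *
            (y + ((n - k : ℕ) : ℝ)) ^ ((n - k : ℕ)) := by
      intro k hk
      have hk' : k ≤ n := by have := Finset.mem_range.mp hk; omega
      have hxk : (0:ℝ) < x + k := by positivity
      have hynk : (0:ℝ) < y + ((n - k : ℕ) : ℝ) := by positivity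
      have hsplit : x + y + (n:ℝ) = (x + k) + (y + ((n - k : ℕ) : ℝ)) := by
        rw [Nat.cast_sub hk']; ring
      have e1 : (x + (k:ℝ)) * (x + (k:ℝ)) ^ ((k : ℤ) - 1) = (x + (k:ℝ)) ^ (k : ℕ) := by
        rw [mul_comm, ← zpow_add_one₀ (ne_of_gt hxk), ← zpow_natCast (x + (k:ℝ)) k]
        congr 1; ring
      have e2 : (y + ((n - k : ℕ) : ℝ)) * (y + ((n - k : ℕ) : ℝ)) ^ (((n - k : ℕ) : ℤ) - 1)
          = (y + ((n - k : ℕ) : ℝ)) ^ ((n - k : ℕ)) := by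
        rw [mul_comm, ← zpow_add_one₀ (ne_of_gt hynk), ← zpow_natCast (y + ((n - k : ℕ) : ℝ)) (n - k)]
        congr 1; ring
      rw [hsplit]
      calc ((x + ↑k) + (y + ((n - k : ℕ) : ℝ))) * ((n.choose k : ℝ) * (x + ↑k) ^ ((k:ℤ) - 1) *
              (y + ((n - k : ℕ) : ℝ)) ^ (((n - k : ℕ) : ℤ) - 1))
          = (n.choose k : ℝ) * ((x + ↑k) * (x + ↑k) ^ ((k:ℤ) - 1)) *
              (y + ((n - k : ℕ) : ℝ)) ^ (((n - k : ℕ) : ℤ) - 1)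
            + (n.choose k : ℝ) * (x + ↑k) ^ ((k:ℤ) - 1) *
              ((y + ((n - k : ℕ) : ℝ)) * (y + ((n - k : ℕ) : ℝ)) ^ (((n - k : ℕ) : ℤ) - 1)) := by
            ring
        _ = _ := by rw [e1, e2]
    rw [Finset.sum_congr rfl hterm, Finset.sum_add_distrib]
    congr 1
    · -- first sum: reflect and apply abel_binom_aux with y
      have haux := abel_binom_aux y hy n x
      have hrefl := Finset.sum_range_reflect
        (fun j => (n.choose j : ℝ) * (y + j) ^ ((j : ℤ) - 1) * (x + ((n - j : ℕ) : ℝ)) ^ (n - j))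
        (n + 1)
      simp only [Nat.add_sub_cancel] at hrefl
      have hsame : ∀ k ∈ Finset.range (n + 1),
          (n.choose k : ℝ) * (x + k) ^ (k : ℕ) *
              (y + ((n - k : ℕ) : ℝ)) ^ (((n - k : ℕ) : ℤ) - 1)
          = (n.choose (n - k) : ℝ) * (y + ((n - k : ℕ) : ℝ)) ^ (((n - k : ℕ) : ℤ) - 1) *
              (x + ((n - (n - k) : ℕ) : ℝ)) ^ (n - (n - k)) := by
        intro k hk
        have hk' : k ≤ n := by have := Finset.mem_range.mp hk; omega
        rw [Nat.choose_symm hk', Nat.sub_sub_self hk']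
        ring
      rw [Finset.sum_congr rfl hsame, hrefl, haux]
      rw [show y + x + (n:ℝ) = x + y + n from by ring]
    · exact abel_binom_aux x hx n y
  have hzp : (x + y + (n:ℝ)) ^ ((n : ℤ) - 1) * (x + y + (n:ℝ)) = (x + y + (n:ℝ)) ^ (n : ℕ) := by
    rw [← zpow_natCast (x + y + (n:ℝ)) n, ← zpow_add_one₀ (ne_of_gt hs)]
    congr 1; ring
  have h2 : (x + y + (n:ℝ)) * S
      = (x + y + (n:ℝ)) * ((x⁻¹ + y⁻¹) * (x + y + (n:ℝ)) ^ ((n : ℤ) - 1)) := by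
    rw [key, ← hzp]; ring
  exact mul_left_cancel₀ (ne_of_gt hs) h2

lemma multinomial_fin_cons (m : ℕ) (a : ℕ) (t : Fin m → ℕ) :
    Nat.multinomial Finset.univ (Fin.cons a t : Fin (m+1) → ℕ)
      = (a + ∑ i, t i).choose a * Nat.multinomial Finset.univ t := by
  unfold Nat.multinomial
  rw [Fin.sum_univ_succ, Fin.prod_univ_succ]
  simp only [Fin.cons_zero, Fin.cons_succ]
  have hd : (∏ i, (t i)!) ∣ (∑ i, t i)! := Nat.prod_factorial_dvd_factorial_sum _ _
  have hdvd : a ! * ∏ i, (t i)! ∣ (a + ∑ i, t i)! :=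
    dvd_trans (mul_dvd_mul_left (a !) hd) (Nat.factorial_mul_factorial_dvd_factorial_add a _)
  rw [Nat.div_eq_iff_eq_mul_left (by positivity) hdvd]
  have h1 : (a + ∑ i, t i).choose a * a ! * (∑ i, t i)! = (a + ∑ i, t i)! := by
    have h := Nat.choose_mul_factorial_mul_factorial (Nat.le_add_right a (∑ i, t i))
    rwa [Nat.add_sub_cancel_left] at h
  rw [← h1]
  conv_lhs => rw [← Nat.div_mul_cancel hd]
  ring

lemma sum_antidiagonalTuple_succ {M : Type*} [AddCommMonoid M] (m n : ℕ)
    (f : (Fin (m+1) → ℕ) → M) :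
    ∑ s ∈ Finset.Nat.antidiagonalTuple (m+1) n, f s
      = ∑ p ∈ Finset.HasAntidiagonal.antidiagonal n, ∑ t ∈ Finset.Nat.antidiagonalTuple m p.2,
          f (Fin.cons p.1 t) := by
  rw [Finset.sum_sigma' (Finset.HasAntidiagonal.antidiagonal n)
    (fun p => Finset.Nat.antidiagonalTuple m p.2) (fun p t => f (Fin.cons p.1 t))]
  refine Finset.sum_nbij'
    (i := fun (s : Fin (m+1) → ℕ) => (⟨(s 0, ∑ i : Fin m, s i.succ), Fin.tail s⟩ :
      Σ _ : ℕ × ℕ, (Fin m → ℕ)))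
    (j := fun (q : Σ _ : ℕ × ℕ, (Fin m → ℕ)) => (Fin.cons q.1.1 q.2 : Fin (m+1) → ℕ))
    ?_ ?_ ?_ ?_ ?_
  · intro s hs
    rw [Finset.Nat.mem_antidiagonalTuple] at hs
    simp only [Finset.mem_sigma, Finset.HasAntidiagonal.mem_antidiagonal, Finset.Nat.mem_antidiagonalTuple]
    exact ⟨by rw [← hs, Fin.sum_univ_succ], rfl⟩
  · intro q hq
    simp only [Finset.mem_sigma, Finset.HasAntidiagonal.mem_antidiagonal,
      Finset.Nat.mem_antidiagonalTuple] at hq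
    rw [Finset.Nat.mem_antidiagonalTuple, Fin.sum_cons, hq.2, hq.1]
  · intro s hs
    exact Fin.cons_self_tail s
  · intro q hq
    simp only [Finset.mem_sigma, Finset.HasAntidiagonal.mem_antidiagonal,
      Finset.Nat.mem_antidiagonalTuple] at hq
    refine Sigma.ext ?_ ?_
    · simp only [Fin.cons_zero, Fin.cons_succ]
      exact Prod.ext rfl (by simpa [Fin.cons_succ] using hq.2)
    · simp [Fin.tail_cons]
  · intro s hs
    simp only [Fin.cons_self_tail]

end AbelAux

/-- The Abel sum `A_n(x_1,…,x_m; p_1,…,p_m)`: the sum over tuples `s` of nonnegative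
integers with `s_1 + ⋯ + s_m = n` of the multinomial coefficient `n!/(s_1!⋯s_m!)`
times `∏_j (x_j + s_j)^(s_j + p_j)`, powers taken in `ℝ` (`zpow`). -/
noncomputable def abelA (m n : ℕ) (x : Fin m → ℝ) (p : Fin m → ℤ) : ℝ :=
  ∑ s ∈ Finset.Nat.antidiagonalTuple m n,
    (Nat.multinomial Finset.univ s : ℝ) * ∏ j, (x j + s j) ^ ((s j : ℤ) + p j)

lemma abel_main_aux : ∀ (m : ℕ) (n : ℕ) (x : Fin (m+1) → ℝ), (∀ j, 0 < x j) →
    abelA (m+1) n x (fun _ => -1) =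
      (∏ j, x j)⁻¹ * (∑ j, x j) * ((∑ j, x j) + n) ^ ((n : ℤ) - 1) := by
  intro m
  induction m with
  | zero =>
    intro n x hx
    have hx0 : (0:ℝ) < x 0 := hx 0
    rw [abelA, Finset.Nat.antidiagonalTuple_one, Finset.sum_singleton]
    have hmul : Nat.multinomial (Finset.univ : Finset (Fin 1)) ![n] = 1 := by
      unfold Nat.multinomial
      rw [Fin.sum_univ_one, Fin.prod_univ_one]
      exact Nat.div_self (Nat.factorial_pos _)
    rw [hmul, Fin.prod_univ_one, Fin.prod_univ_one, Fin.sum_univ_one]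
    simp only [Matrix.cons_val_zero, Nat.cast_one, one_mul]
    rw [inv_mul_cancel₀ (ne_of_gt hx0), one_mul, sub_eq_add_neg]
  | succ m ih =>
    intro n x hx
    have hx0 : (0:ℝ) < x 0 := hx 0
    set X : ℝ := ∑ j : Fin (m+1), x j.succ with hX
    set P : ℝ := ∏ j : Fin (m+1), x j.succ with hP
    have hXpos : 0 < X := Finset.sum_pos (fun j _ => hx j.succ) Finset.univ_nonempty
    have hPpos : 0 < P := Finset.prod_pos (fun j _ => hx j.succ)
    rw [abelA, sum_antidiagonalTuple_succ]
    have hinner : ∀ p ∈ Finset.HasAntidiagonal.antidiagonal n,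
        (∑ t ∈ Finset.Nat.antidiagonalTuple (m+1) p.2,
          (Nat.multinomial Finset.univ (Fin.cons p.1 t : Fin (m+2) → ℕ) : ℝ) *
            ∏ j : Fin (m+2), (x j + (Fin.cons p.1 t : Fin (m+2) → ℕ) j) ^
              (((Fin.cons p.1 t : Fin (m+2) → ℕ) j : ℤ) + (fun _ => (-1:ℤ)) j))
        = (n.choose p.1 : ℝ) * (x 0 + p.1) ^ ((p.1 : ℤ) - 1) *
            (P⁻¹ * X * (X + p.2) ^ ((p.2 : ℤ) - 1)) := by
      intro p hp
      have hpn : p.1 + p.2 = n := Finset.HasAntidiagonal.mem_antidiagonal.mp hp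
      have h1 : ∀ t ∈ Finset.Nat.antidiagonalTuple (m+1) p.2,
          (Nat.multinomial Finset.univ (Fin.cons p.1 t : Fin (m+2) → ℕ) : ℝ) *
            ∏ j : Fin (m+2), (x j + (Fin.cons p.1 t : Fin (m+2) → ℕ) j) ^
              (((Fin.cons p.1 t : Fin (m+2) → ℕ) j : ℤ) + (fun _ => (-1:ℤ)) j)
          = (n.choose p.1 : ℝ) * (x 0 + p.1) ^ ((p.1 : ℤ) - 1) *
            ((Nat.multinomial Finset.univ t : ℝ) *
              ∏ j : Fin (m+1), (x j.succ + t j) ^ ((t j : ℤ) + (fun _ => (-1:ℤ)) j)) := by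
        intro t ht
        have hts : ∑ i, t i = p.2 := Finset.Nat.mem_antidiagonalTuple.mp ht
        rw [multinomial_fin_cons, hts, hpn]
        rw [Fin.prod_univ_succ]
        simp only [Fin.cons_zero, Fin.cons_succ]
        rw [Nat.cast_mul, sub_eq_add_neg]
        ring
      rw [Finset.sum_congr rfl h1, ← Finset.mul_sum]
      have h2 : (∑ t ∈ Finset.Nat.antidiagonalTuple (m+1) p.2,
          (Nat.multinomial Finset.univ t : ℝ) *
            ∏ j : Fin (m+1), (x j.succ + t j) ^ ((t j : ℤ) + (fun _ => (-1:ℤ)) j))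
          = P⁻¹ * X * (X + p.2) ^ ((p.2 : ℤ) - 1) := by
        have := ih p.2 (fun j => x j.succ) (fun j => hx j.succ)
        rw [abelA] at this
        simpa using this
      rw [h2]
    rw [Finset.sum_congr rfl hinner]
    rw [Finset.Nat.sum_antidiagonal_eq_sum_range_succ_mk]
    have h3 : ∀ k ∈ Finset.range (n+1),
        (n.choose k : ℝ) * (x 0 + k) ^ ((k : ℤ) - 1) *
          (P⁻¹ * X * (X + ((n - k : ℕ) : ℝ)) ^ (((n - k : ℕ) : ℤ) - 1))
        = (P⁻¹ * X) * ((n.choose k : ℝ) * (x 0 + k) ^ ((k : ℤ) - 1) *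
            (X + ((n - k : ℕ) : ℝ)) ^ (((n - k : ℕ) : ℤ) - 1)) := by
      intro k hk; ring
    rw [Finset.sum_congr rfl h3, ← Finset.mul_sum,
      abel_binom_neg (x 0) X hx0 hXpos n]
    rw [Fin.prod_univ_succ, Fin.sum_univ_succ, ← hX, ← hP]
    have hfinal : P⁻¹ * X * (((x 0)⁻¹ + X⁻¹) ) = (x 0 * P)⁻¹ * (x 0 + X) := by
      field_simp
      ring
    calc P⁻¹ * X * (((x 0)⁻¹ + X⁻¹) * (x 0 + X + n) ^ ((n:ℤ) - 1))
        = (P⁻¹ * X * ((x 0)⁻¹ + X⁻¹)) * (x 0 + X + n) ^ ((n:ℤ) - 1) := by ring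
      _ = (x 0 * P)⁻¹ * (x 0 + X) * (x 0 + X + n) ^ ((n:ℤ) - 1) := by rw [hfinal]

/-- Abel's multinomial identity, first special instance:
`A_n(x_1,…,x_m; −1,…,−1) = (x_1⋯x_m)⁻¹·(x_1+⋯+x_m)·(x_1+⋯+x_m+n)^(n-1)`. -/
theorem abel_multinomial_special_one (m n : ℕ) (hm : 1 ≤ m)
    (x : Fin m → ℝ) (hx : ∀ j, 0 < x j) :
    abelA m n x (fun _ => -1) =
      (∏ j, x j)⁻¹ * (∑ j, x j) * ((∑ j, x j) + n) ^ ((n : ℤ) - 1) := by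
  obtain ⟨m', rfl⟩ : ∃ m', m = m' + 1 := ⟨m - 1, by omega⟩
  exact abel_main_aux m' n x hx
end

section
/- For all integers 1 ≤ m ≤ n, the following identity of natural numbers holds: Σ_{s=0}^{m-1} C(m-1,s)·(n-s)^{m-1-s}·(s+1)^{s} = Σ_{s=0}^{m-1} C(m-1,s)·(n+1)^{s}·(m-1-s)!. Equivalently, over the reals, Σ_{s=0}^{m-1} C(m-1,s)·(n-s)^{m-1-s}·(s+1)^{s} = (m-1)!·Σ_{s=0}^{m-1} (n+1)^{s}/s!. -/
open Finset Nat Function fwdDiff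

lemma fwdDiff_pow_eval (j : ℕ) :
    Δ_[(1:ℤ)] (fun x : ℤ ↦ x ^ j) = fun x : ℤ ↦ ∑ t ∈ range j, (j.choose t : ℤ) * x ^ t := by
  funext x
  have h := add_pow x (1:ℤ) j
  simp only [one_pow, mul_one] at h
  simp only [fwdDiff, h, sum_range_succ, Nat.choose_self, Nat.cast_one, mul_one,
    add_sub_cancel_right]
  exact Finset.sum_congr rfl fun t ht => by ring

lemma fd_pow (k : ℕ) : ∀ j ≤ k, ∀ y : ℤ,
    (fwdDiff (1:ℤ))^[k] (fun x : ℤ ↦ x ^ j) y = if j = k then (k.factorial : ℤ) else 0 := by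
  induction k with
  | zero => intro j hj y; interval_cases j; simp
  | succ k IH =>
    intro j hj y
    rw [Function.iterate_succ_apply, fwdDiff_pow_eval]
    have : (fun x : ℤ ↦ ∑ t ∈ range j, (j.choose t : ℤ) * x ^ t)
        = ∑ t ∈ range j, (j.choose t : ℤ) • (fun x : ℤ ↦ x ^ t) := by
      funext x; simp [smul_eq_mul]
    rw [this, fwdDiff_iter_finset_sum]
    simp only [fwdDiff_iter_const_smul, Pi.smul_apply, Finset.sum_apply, smul_eq_mul]
    have hstep : ∀ t ∈ range j, (j.choose t : ℤ) * ((fwdDiff (1:ℤ))^[k] (fun x : ℤ ↦ x ^ t) y)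
        = if t = k then (j.choose t : ℤ) * k.factorial else 0 := by
      intro t ht
      have ht' := Finset.mem_range.1 ht
      rw [IH t (by omega)]
      split <;> simp
    rw [Finset.sum_congr rfl hstep, Finset.sum_ite_eq' (range j) k
      (fun t => (j.choose t : ℤ) * k.factorial)]
    by_cases hjk : j = k + 1
    · subst hjk
      simp only [Nat.choose_succ_self_right, Nat.factorial_succ]
      simp only [Finset.mem_range, Nat.lt_succ_self, if_true]
      push_cast
      ring
    · have : k ∉ range j := by simp; omega
      simp [this, hjk]
lemma sum_shift_pow (k : ℕ) (y : ℤ) :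
    ∑ s ∈ range (k+1), ((-1:ℤ)^(k-s) * k.choose s) * (y + s)^k = k.factorial := by
  have h := fwdDiff_iter_eq_sum_shift (1:ℤ) (fun x : ℤ ↦ x ^ k) k y
  rw [fd_pow k k le_rfl y] at h
  simp only [if_true, eq_self_iff_true] at h
  rw [show ((k.factorial : ℤ)) = (if True then (k.factorial:ℤ) else 0) by simp, h]
  apply Finset.sum_congr rfl
  intro s hs
  simp [smul_eq_mul]

lemma base_L (k : ℕ) :
    ∑ s ∈ range (k+1), (k.choose s : ℤ) * (s+1)^s * ((-1:ℤ) - s)^(k-s) = k.factorial := by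
  rw [← sum_shift_pow k 1]
  apply Finset.sum_congr rfl
  intro s hs
  have hs' : s ≤ k := by have := Finset.mem_range.1 hs; omega
  have h1 : ((-1:ℤ) - s) = -((1:ℤ) + s) := by ring
  have h2 : ((1:ℤ) + s)^k = (((s:ℤ))+1)^s * ((1:ℤ)+s)^(k-s) := by
    rw [show ((s:ℤ))+1 = (1:ℤ)+s by ring, ← pow_add]
    congr 1
    omega
  rw [h1, neg_pow, h2]
  ring
def Lz (k : ℕ) (n : ℤ) : ℤ := ∑ s ∈ range (k+1), (k.choose s : ℤ) * ((s:ℤ)+1)^s * (n - s)^(k-s)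

def Rz (k : ℕ) (n : ℤ) : ℤ := ∑ s ∈ range (k+1), (k.choose s : ℤ) * (n+1)^s * ((k-s).factorial : ℤ)

lemma L_transform (k : ℕ) (n : ℤ) : Lz k (n+1) = ∑ i ∈ range (k+1), (k.choose i : ℤ) * Lz i n := by
  have lhs : Lz k (n+1) = ∑ s ∈ range (k+1), ∑ j ∈ range (k-s+1),
      (k.choose s : ℤ) * ((k-s).choose j : ℤ) * ((s:ℤ)+1)^s * (n - s)^j := by
    unfold Lz
    apply Finset.sum_congr rfl
    intro s hs
    have : (n + 1 - (s:ℤ)) = (n - s) + 1 := by ring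
    rw [this, add_pow (n - (s:ℤ)) 1 (k-s), Finset.mul_sum]
    apply Finset.sum_congr rfl
    intro j hj
    simp only [one_pow, mul_one]
    ring
  rw [lhs]
  -- now the RHS
  have rhs : ∀ i ∈ range (k+1), (k.choose i : ℤ) * Lz i n
      = ∑ s ∈ range (k+1), (k.choose i : ℤ) * ((i.choose s : ℤ) * ((s:ℤ)+1)^s * (n - s)^(i-s)) := by
    intro i hi
    have hik : i + 1 ≤ k + 1 := Finset.mem_range.1 hi
    unfold Lz
    rw [Finset.mul_sum]
    apply Finset.sum_subset (Finset.range_subset_range.2 hik) ?_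
    intro s _ hs
    have : i < s := by simpa using hs
    rw [Nat.choose_eq_zero_of_lt this]
    simp
  rw [Finset.sum_congr rfl rhs, Finset.sum_comm]
  apply Finset.sum_congr rfl
  intro s hs
  have hsk : s ≤ k := by have := Finset.mem_range.1 hs; omega
  have step1 : ∑ i ∈ range (k+1), (k.choose i : ℤ) * ((i.choose s : ℤ) * ((s:ℤ)+1)^s * (n - s)^(i-s))
      = ∑ i ∈ Ico s (k+1), (k.choose i : ℤ) * ((i.choose s : ℤ) * ((s:ℤ)+1)^s * (n - s)^(i-s)) := by
    apply (Finset.sum_subset ?_ ?_).symm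
    · intro i hi
      simp only [Finset.mem_Ico] at hi
      exact Finset.mem_range.2 hi.2
    · intro i hi hi'
      simp only [Finset.mem_range, Finset.mem_Ico, not_and, not_le] at hi hi'
      have : i < s := by omega
      rw [Nat.choose_eq_zero_of_lt this]
      simp
  rw [step1, Finset.sum_Ico_eq_sum_range]
  have hr : k + 1 - s = k - s + 1 := by omega
  rw [hr]
  apply Finset.sum_congr rfl
  intro j hj
  have hjk : j ≤ k - s := by have := Finset.mem_range.1 hj; omega
  have h1 : s + j - s = j := by omega
  have h2 : k.choose (s+j) * (s+j).choose s = k.choose s * (k-s).choose j := by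
    have := Nat.choose_mul (n := k) (show s ≤ s + j by omega)
    simpa [h1] using this
  rw [h1]
  have : (k.choose (s+j) : ℤ) * ((s+j).choose s : ℤ) = (k.choose s : ℤ) * ((k-s).choose j : ℤ) := by
    exact_mod_cast congrArg (Nat.cast : ℕ → ℤ) h2
  linear_combination (-(((s:ℤ)+1)^s * (n - (s:ℤ))^j)) * this
lemma coeff_eq (k j : ℕ) (hj : j ≤ k) :
    ∑ s ∈ range (k+1), k.choose s * s.choose j * (k-s).factorial
      = ∑ i ∈ range (k+1), k.choose i * i.choose j * (i-j).factorial := by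
  have restrict : ∀ g : ℕ → ℕ, (∀ s, s < j → s.choose j = 0) →
      ∑ s ∈ range (k+1), k.choose s * s.choose j * g s
        = ∑ s ∈ Ico j (k+1), k.choose s * s.choose j * g s := by
    intro g hg
    apply (Finset.sum_subset ?_ ?_).symm
    · intro i hi; exact Finset.mem_range.2 (Finset.mem_Ico.1 hi).2
    · intro i hi hi'
      simp only [Finset.mem_range, Finset.mem_Ico, not_and, not_le] at hi hi'
      rw [hg i (by omega)]
      simp
  rw [restrict (fun s => (k-s).factorial) (fun s hs => Nat.choose_eq_zero_of_lt hs),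
      restrict (fun s => (s-j).factorial) (fun s hs => Nat.choose_eq_zero_of_lt hs),
      Finset.sum_Ico_eq_sum_range, Finset.sum_Ico_eq_sum_range]
  have hr : k + 1 - j = (k - j) + 1 := by omega
  rw [hr]
  have key : ∀ t ∈ range ((k-j)+1),
      k.choose (j+t) * (j+t).choose j = k.choose j * (k-j).choose t := by
    intro t ht
    have htk : t ≤ k - j := by have := Finset.mem_range.1 ht; omega
    have := Nat.choose_mul (n := k) (show j ≤ j + t by omega)
    simpa [show j + t - j = t by omega] using this
  calc ∑ t ∈ range ((k-j)+1), k.choose (j+t) * (j+t).choose j * (k-(j+t)).factorial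
      = ∑ t ∈ range ((k-j)+1), k.choose j * ((k-j).choose t * ((k-j)-t).factorial) := by
        apply Finset.sum_congr rfl
        intro t ht
        rw [← Nat.mul_assoc, key t ht, Nat.mul_assoc,
          show k - (j+t) = (k-j) - t by omega, Nat.mul_assoc]
    _ = ∑ t ∈ range ((k-j)+1), k.choose j * ((k-j).choose t * t.factorial) := by
        rw [← Finset.mul_sum, ← Finset.mul_sum]
        congr 1
        have := Finset.sum_range_reflect (fun t => (k-j).choose t * t.factorial) ((k-j)+1)
        rw [← this]
        apply Finset.sum_congr rfl
        intro t ht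
        have htk : t ≤ k - j := by have := Finset.mem_range.1 ht; omega
        have h1 : (k-j) + 1 - 1 - t = (k-j) - t := by omega
        rw [h1, Nat.choose_symm htk]
    _ = ∑ t ∈ range ((k-j)+1), k.choose (j+t) * (j+t).choose j * ((j+t)-j).factorial := by
        apply Finset.sum_congr rfl
        intro t ht
        rw [← Nat.mul_assoc, key t ht, Nat.mul_assoc,
          show j + t - j = t by omega, Nat.mul_assoc]

lemma R_transform (k : ℕ) (n : ℤ) : Rz k (n+1) = ∑ i ∈ range (k+1), (k.choose i : ℤ) * Rz i n := by
  have lhs : Rz k (n+1) = ∑ s ∈ range (k+1), ∑ j ∈ range (k+1),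
      ((k.choose s * s.choose j * (k-s).factorial : ℕ) : ℤ) * (n+1)^j := by
    unfold Rz
    apply Finset.sum_congr rfl
    intro s hs
    have hsk : s ≤ k := by have := Finset.mem_range.1 hs; omega
    have : (n + 1 + 1 : ℤ)^s = ∑ j ∈ range (s+1), (s.choose j : ℤ) * (n+1)^j := by
      rw [add_pow]
      apply Finset.sum_congr rfl
      intro j hj
      simp only [one_pow, mul_one]
      ring
    rw [this]
    have hext : ∑ j ∈ range (k+1), ((k.choose s * s.choose j * (k-s).factorial : ℕ) : ℤ) * (n+1)^j
        = ∑ j ∈ range (s+1), ((k.choose s * s.choose j * (k-s).factorial : ℕ) : ℤ) * (n+1)^j := by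
      symm
      apply Finset.sum_subset (Finset.range_subset_range.2 (by omega)) ?_
      intro j _ hj
      have : s < j := by simpa using hj
      rw [Nat.choose_eq_zero_of_lt this]
      simp
    rw [hext, Finset.mul_sum, Finset.sum_mul]
    apply Finset.sum_congr rfl
    intro j hj
    push_cast
    ring
  have rhs : ∀ i ∈ range (k+1), (k.choose i : ℤ) * Rz i n
      = ∑ s ∈ range (k+1), ((k.choose i * i.choose s * (i-s).factorial : ℕ) : ℤ) * (n+1)^s := by
    intro i hi
    have hik : i + 1 ≤ k + 1 := Finset.mem_range.1 hi
    unfold Rz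
    rw [Finset.mul_sum]
    rw [show ∑ s ∈ range (i+1), (k.choose i : ℤ) * ((i.choose s : ℤ) * (n+1)^s * ((i-s).factorial : ℤ))
        = ∑ s ∈ range (i+1), ((k.choose i * i.choose s * (i-s).factorial : ℕ) : ℤ) * (n+1)^s
      from Finset.sum_congr rfl (fun s _ => by push_cast; ring)]
    apply Finset.sum_subset (Finset.range_subset_range.2 hik) ?_
    intro s _ hs
    have : i < s := by simpa using hs
    rw [Nat.choose_eq_zero_of_lt this]
    simp
  rw [lhs, Finset.sum_congr rfl rhs]
  rw [Finset.sum_comm]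
  conv_rhs => rw [Finset.sum_comm]
  apply Finset.sum_congr rfl
  intro j hj
  have hjk : j ≤ k := by have := Finset.mem_range.1 hj; omega
  rw [← Finset.sum_mul, ← Finset.sum_mul]
  congr 1
  rw [← Nat.cast_sum, ← Nat.cast_sum]
  exact_mod_cast congrArg (Nat.cast : ℕ → ℤ) (coeff_eq k j hjk)

lemma base_Lz (k : ℕ) : Lz k (-1) = k.factorial := by
  rw [show ((k.factorial : ℤ)) = ∑ s ∈ range (k+1), ((-1:ℤ)^(k-s) * k.choose s) * ((1:ℤ) + s)^k
    from (sum_shift_pow k 1).symm]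
  unfold Lz
  apply Finset.sum_congr rfl
  intro s hs
  have hs' : s ≤ k := by have := Finset.mem_range.1 hs; omega
  have h1 : ((-1:ℤ) - s) = -((1:ℤ) + s) := by ring
  have h2 : ((1:ℤ) + s)^k = (((s:ℤ))+1)^s * ((1:ℤ)+s)^(k-s) := by
    rw [show ((s:ℤ))+1 = (1:ℤ)+s by ring, ← pow_add]
    congr 1
    omega
  rw [h1, neg_pow, h2]
  ring

lemma base_Rz (k : ℕ) : Rz k (-1) = k.factorial := by
  unfold Rz
  rw [Finset.sum_eq_single_of_mem 0 (Finset.mem_range.2 (by omega))]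
  · simp
  · intro s _ hs
    have h0 : (-1 + 1 : ℤ) = 0 := by ring
    rw [h0, zero_pow hs]
    ring

lemma LR_eq (j : ℕ) : ∀ k, Lz k ((j:ℤ) - 1) = Rz k ((j:ℤ) - 1) := by
  induction j with
  | zero => intro k; simpa using (base_Lz k).trans (base_Rz k).symm
  | succ j IH =>
    intro k
    have h : ((j+1:ℕ):ℤ) - 1 = ((j:ℤ) - 1) + 1 := by push_cast; ring
    rw [h, L_transform, R_transform]
    exact Finset.sum_congr rfl fun i _ => by rw [IH i]

lemma LR_eq_nat (k n : ℕ) : Lz k (n:ℤ) = Rz k (n:ℤ) := by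
  have h := LR_eq (n+1) k
  have h2 : ((n+1:ℕ):ℤ) - 1 = (n:ℤ) := by push_cast; ring
  rwa [h2] at h

/-- For `1 ≤ m ≤ n`:
`Σ_{s=0}^{m-1} C(m-1,s)·(n-s)^(m-1-s)·(s+1)^s = Σ_{s=0}^{m-1} C(m-1,s)·(n+1)^s·(m-1-s)!`
as natural numbers, and equivalently, over the reals, the left-hand side equals
`(m-1)!·Σ_{s=0}^{m-1} (n+1)^s/s!`. -/
theorem abel_poisson_identity (m n : ℕ) (hm : 1 ≤ m) (hmn : m ≤ n) :
    (∑ s ∈ Finset.range m, (m - 1).choose s * (n - s) ^ (m - 1 - s) * (s + 1) ^ s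
      = ∑ s ∈ Finset.range m, (m - 1).choose s * (n + 1) ^ s * (m - 1 - s).factorial)
    ∧
    ((∑ s ∈ Finset.range m,
        ((m - 1).choose s : ℝ) * ((n : ℝ) - s) ^ (m - 1 - s) * ((s : ℝ) + 1) ^ s)
      = ((m - 1).factorial : ℝ) *
        ∑ s ∈ Finset.range m, ((n : ℝ) + 1) ^ s / (s.factorial : ℝ)) := by
  obtain ⟨k, rfl⟩ : ∃ k, m = k + 1 := ⟨m - 1, by omega⟩
  simp only [Nat.add_sub_cancel]
  have hzn := LR_eq_nat k n
  have cast1 : ((∑ s ∈ Finset.range (k+1), k.choose s * (n - s) ^ (k - s) * (s + 1) ^ s : ℕ) : ℤ)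
      = Lz k n := by
    unfold Lz
    rw [Nat.cast_sum]
    apply Finset.sum_congr rfl
    intro s hs
    have hsn : s ≤ n := by have := Finset.mem_range.1 hs; omega
    rw [Nat.cast_mul, Nat.cast_mul, Nat.cast_pow, Nat.cast_pow, Nat.cast_sub hsn]
    push_cast
    ring
  have cast2 : ((∑ s ∈ Finset.range (k+1), k.choose s * (n + 1) ^ s * (k - s).factorial : ℕ) : ℤ)
      = Rz k n := by
    unfold Rz
    rw [Nat.cast_sum]
    apply Finset.sum_congr rfl
    intro s hs
    push_cast
    ring
  have part1 : ∑ s ∈ Finset.range (k+1), k.choose s * (n - s) ^ (k - s) * (s + 1) ^ s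
      = ∑ s ∈ Finset.range (k+1), k.choose s * (n + 1) ^ s * (k - s).factorial := by
    have := cast1.trans (hzn.trans cast2.symm)
    exact_mod_cast this
  refine ⟨part1, ?_⟩
  have hL : (∑ s ∈ Finset.range (k+1),
        (k.choose s : ℝ) * ((n : ℝ) - s) ^ (k - s) * ((s : ℝ) + 1) ^ s)
      = ((∑ s ∈ Finset.range (k+1), k.choose s * (n - s) ^ (k - s) * (s + 1) ^ s : ℕ) : ℝ) := by
    rw [Nat.cast_sum]
    apply Finset.sum_congr rfl
    intro s hs
    have hsn : s ≤ n := by have := Finset.mem_range.1 hs; omega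
    rw [Nat.cast_mul, Nat.cast_mul, Nat.cast_pow, Nat.cast_pow, Nat.cast_sub hsn]
    push_cast
    ring
  rw [hL, part1, Nat.cast_sum, Finset.mul_sum]
  apply Finset.sum_congr rfl
  intro s hs
  have hsk : s ≤ k := by have := Finset.mem_range.1 hs; omega
  have hfac : ((k.choose s * s.factorial * (k - s).factorial : ℕ) : ℝ) = (k.factorial : ℝ) := by
    exact_mod_cast congrArg (Nat.cast : ℕ → ℝ) (Nat.choose_mul_factorial_mul_factorial hsk)
  push_cast at hfac ⊢
  have hs0 : (s.factorial : ℝ) ≠ 0 := by exact_mod_cast s.factorial_ne_zero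
  field_simp
  linear_combination hfac
end

section
/- For all integers 1 ≤ m ≤ n, the following identity holds in ℝ: Σ_{s=0}^{m-1} C(m-1,s)·(n-s)^{m-s-2}·(s+1)^{s-1} = ((n-m+2)/(n-m+1))·(n+1)^{m-2}. -/
open Finset fwdDiff Polynomial

noncomputable def abelC (s : ℕ) : ℝ := ((s:ℝ)+1)^s / ((s:ℝ)+1)

lemma fwdDiff_iter_zero_fun (n : ℕ) : (Δ_[(1:ℕ)])^[n] (0 : ℕ → ℝ) = 0 := by
  induction n with
  | zero => rfl
  | succ n ih =>
      rw [Function.iterate_succ_apply,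
        show Δ_[(1:ℕ)] (0 : ℕ → ℝ) = 0 from funext fun x => sub_self 0, ih]

lemma fwdDiff_iter_poly : ∀ (n : ℕ) (P : Polynomial ℝ), P.natDegree < n →
    (Δ_[(1:ℕ)])^[n] (fun x : ℕ => P.eval (x:ℝ)) = 0 := by
  intro n
  induction n with
  | zero => intro P h; exact absurd h (Nat.not_lt_zero _)
  | succ n ih =>
    intro P hP
    have hQ : Δ_[(1:ℕ)] (fun x : ℕ => P.eval (x:ℝ))
        = fun x : ℕ => (P.comp (X + C 1) - P).eval (x:ℝ) := by
      funext x
      simp only [fwdDiff, eval_sub, eval_comp, eval_add, eval_X, eval_C]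
      push_cast
      ring
    rw [Function.iterate_succ_apply, hQ]
    set Q := P.comp (X + C 1) - P with hQdef
    by_cases h0 : Q = 0
    · rw [h0]
      simp only [eval_zero]; exact fwdDiff_iter_zero_fun n
    · apply ih
      have hP1 : P.natDegree ≠ 0 := by
        intro hd
        obtain ⟨a, rfl⟩ := Polynomial.natDegree_eq_zero.mp hd
        simp [hQdef] at h0
      have hPne : P ≠ 0 := by
        intro h; apply hP1; simp [h]
      have hnd1 : (X + C (1:ℝ)).natDegree = 1 := Polynomial.natDegree_X_add_C 1
      have hlc : (P.comp (X + C 1)).leadingCoeff = P.leadingCoeff := by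
        rw [Polynomial.leadingCoeff_comp (by rw [hnd1]; norm_num),
          Polynomial.leadingCoeff_X_add_C, one_pow, mul_one]
      have hcomp_ne : P.comp (X + C 1) ≠ 0 := by
        intro h
        apply hPne
        rw [← Polynomial.leadingCoeff_eq_zero, ← hlc, h, Polynomial.leadingCoeff_zero]
      have hdeg : (P.comp (X + C 1)).degree = P.degree := by
        rw [Polynomial.degree_eq_natDegree hcomp_ne, Polynomial.degree_eq_natDegree hPne,
          Polynomial.natDegree_comp, hnd1, mul_one]
      have hlt : Q.degree < P.degree := by
        have := Polynomial.degree_sub_lt hdeg hcomp_ne hlc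
        rwa [hdeg] at this
      have := Polynomial.natDegree_lt_natDegree h0 hlt
      omega


lemma alt_sum_poly (n : ℕ) (P : Polynomial ℝ) (h : P.natDegree < n) :
    ∑ s ∈ range (n+1), ((-1:ℝ))^(n-s) * (n.choose s) * P.eval (s:ℝ) = 0 := by
  have hd := fwdDiff_iter_poly n P h
  have h0 := fwdDiff_iter_eq_sum_shift (1:ℕ) (fun x : ℕ => P.eval (x:ℝ)) n 0
  rw [hd] at h0
  simp only [Pi.zero_apply, zero_add, smul_eq_mul, mul_one] at h0
  have step : ∑ s ∈ range (n+1), ((-1:ℝ))^(n-s) * (n.choose s) * P.eval (s:ℝ)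
      = ∑ x ∈ range (n+1), (((-1:ℤ)^(n-x) * (n.choose x) : ℤ)) • P.eval (x:ℝ) := by
    refine Finset.sum_congr rfl fun s hs => ?_
    rw [zsmul_eq_mul]
    push_cast
    ring
  rw [step, ← h0]



lemma abelC_mul_pow (s k : ℕ) (hs : s ≤ k+1) :
    abelC s * (((s:ℝ)+1))^(k+1-s) = ((s:ℝ)+1)^k := by
  have h1 : (0:ℝ) < (s:ℝ)+1 := by positivity
  rw [abelC, div_mul_eq_mul_div, ← pow_add, show s + (k+1-s) = k+1 from by omega,
    pow_succ, mul_div_cancel_right₀ _ (ne_of_gt h1)]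


lemma abel_A : ∀ (k : ℕ) (y : ℝ),
    ∑ s ∈ range (k+1), (k.choose s : ℝ) * abelC s * (y + (k:ℝ) - s)^(k-s)
      = (y + (k:ℝ) + 1)^k := by
  intro k
  induction k with
  | zero => intro y; simp [abelC]
  | succ k ih =>
    have key : ∀ y : ℝ,
        (∑ s ∈ range (k+1+1), ((k+1).choose s : ℝ) * abelC s
            * (y + ((k:ℝ)+1) - s)^(k+1-s))
          - (y + ((k:ℝ)+1) + 1)^(k+1) = 0 := by
      have hconst : ∀ y : ℝ, HasDerivAt (fun y : ℝ =>
          (∑ s ∈ range (k+1+1), ((k+1).choose s : ℝ) * abelC s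
            * (y + ((k:ℝ)+1) - s)^(k+1-s))
          - (y + ((k:ℝ)+1) + 1)^(k+1)) 0 y := by
        intro y
        have hsum : HasDerivAt (fun y : ℝ =>
            ∑ s ∈ range (k+1+1), ((k+1).choose s : ℝ) * abelC s
              * (y + ((k:ℝ)+1) - s)^(k+1-s))
            (∑ s ∈ range (k+1+1), ((k+1).choose s : ℝ) * abelC s
              * ((k+1-s : ℕ) * (y + ((k:ℝ)+1) - s)^(k+1-s-1) * 1)) y := by
          refine HasDerivAt.fun_sum fun s _ => ?_
          exact ((((hasDerivAt_id y).add_const ((k:ℝ)+1)).sub_const (s:ℝ)).pow _).const_mul _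
        have h2 : HasDerivAt (fun y : ℝ => (y + ((k:ℝ)+1) + 1)^(k+1))
            ((k+1 : ℕ) * (y + ((k:ℝ)+1) + 1)^(k+1-1) * 1) y :=
          (((hasDerivAt_id y).add_const ((k:ℝ)+1)).add_const 1).pow _
        have hD : (∑ s ∈ range (k+1+1), ((k+1).choose s : ℝ) * abelC s
              * ((k+1-s : ℕ) * (y + ((k:ℝ)+1) - s)^(k+1-s-1) * 1))
            = ((k+1 : ℕ) * (y + ((k:ℝ)+1) + 1)^(k+1-1) * 1) := by
          rw [Finset.sum_range_succ]
          simp only [Nat.sub_self, Nat.cast_zero, zero_mul, mul_zero, zero_add, add_zero, mul_one]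
          have step : ∀ s ∈ range (k+1), ((k+1).choose s : ℝ) * abelC s
                * ((k+1-s : ℕ) * (y + ((k:ℝ)+1) - s)^(k+1-s-1))
              = ((k+1 : ℕ) : ℝ) * ((k.choose s : ℝ) * abelC s * ((y+1) + (k:ℝ) - s)^(k-s)) := by
            intro s hs
            have hs' : s ≤ k := by simpa [Nat.lt_succ_iff] using hs
            have hNat : (k+1).choose s * (k+1-s) = (k+1) * k.choose s :=
              (Nat.choose_mul_succ_eq k s).symm.trans (mul_comm _ _)
            have hcast : ((k+1).choose s : ℝ) * ((k+1-s : ℕ) : ℝ)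
                = ((k+1 : ℕ) : ℝ) * (k.choose s : ℝ) := by exact_mod_cast congrArg (Nat.cast (R := ℝ)) hNat
            have hexp : k+1-s-1 = k-s := by omega
            have hbase : y + ((k:ℝ)+1) - s = (y+1) + (k:ℝ) - s := by ring
            rw [hexp, hbase]
            linear_combination (abelC s * ((y+1) + (k:ℝ) - (s:ℝ))^(k-s)) * hcast
          rw [Finset.sum_congr rfl step, ← Finset.mul_sum, ih (y+1)]
          have : (y+1) + (k:ℝ) + 1 = y + ((k:ℝ)+1) + 1 := by ring
          rw [this]
          norm_num
        have := hsum.sub h2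
        rw [hD, sub_self] at this
        exact this
      intro y
      have hc := is_const_of_deriv_eq_zero
        (f := fun y : ℝ =>
          (∑ s ∈ range (k+1+1), ((k+1).choose s : ℝ) * abelC s
            * (y + ((k:ℝ)+1) - s)^(k+1-s))
          - (y + ((k:ℝ)+1) + 1)^(k+1))
        (fun x => (hconst x).differentiableAt) (fun x => (hconst x).deriv) y (-((k:ℝ)+2))
      rw [hc]
      have hz : (-((k:ℝ)+2) + ((k:ℝ)+1) + 1) = 0 := by ring
      rw [hz, zero_pow (Nat.succ_ne_zero k), sub_zero]
      have step2 : ∀ s ∈ range (k+1+1), ((k+1).choose s : ℝ) * abelC s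
            * (-((k:ℝ)+2) + ((k:ℝ)+1) - s)^(k+1-s)
          = ((-1:ℝ))^(k+1-s) * (((k+1).choose s : ℝ)) * (((X + C 1 : Polynomial ℝ))^k).eval (s:ℝ) := by
        intro s hs
        have hs' : s ≤ k+1 := by simpa [Nat.lt_succ_iff] using hs
        have hb : (-((k:ℝ)+2) + ((k:ℝ)+1) - s) = -((s:ℝ)+1) := by ring
        rw [hb, neg_pow, eval_pow, eval_add, eval_X, eval_C]
        have h3 := abelC_mul_pow s k hs'
        linear_combination ((-1:ℝ)^(k+1-s) * (((k+1).choose s : ℝ))) * h3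
      rw [Finset.sum_congr rfl step2]
      apply alt_sum_poly
      rw [natDegree_pow, natDegree_X_add_C, mul_one]
      omega
    intro y
    have := key y
    have goal := sub_eq_zero.mp this
    push_cast at goal ⊢
    convert goal using 2


lemma abel_B (j : ℕ) (y : ℝ) :
    y * (∑ s ∈ range (j+1), ((j+1).choose s : ℝ) * abelC s * (y + (j:ℝ) + 1 - s)^(j-s))
      = (y+1) * (y + (j:ℝ) + 2)^j - abelC (j+1) := by
  rw [Finset.mul_sum]
  have step : ∀ s ∈ range (j+1),
      y * (((j+1).choose s : ℝ) * abelC s * (y + (j:ℝ) + 1 - s)^(j-s))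
        = ((j+1).choose s : ℝ) * abelC s * (y + ((j:ℝ)+1) - s)^(j+1-s)
          - ((j+1:ℕ):ℝ) * ((j.choose s : ℝ) * abelC s * ((y+1) + (j:ℝ) - s)^(j-s)) := by
    intro s hs
    have hs' : s ≤ j := by simpa [Nat.lt_succ_iff] using hs
    have hjs : j+1-s = (j-s)+1 := by omega
    have hNat : (j+1).choose s * (j+1-s) = (j+1) * j.choose s :=
      (Nat.choose_mul_succ_eq j s).symm.trans (mul_comm _ _)
    have hcast : ((j+1).choose s : ℝ) * ((j:ℝ)+1-(s:ℝ)) = ((j+1:ℕ):ℝ) * (j.choose s : ℝ) := by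
      have := congrArg (Nat.cast (R := ℝ)) hNat
      push_cast [Nat.cast_sub (by omega : s ≤ j+1)] at this
      push_cast
      linarith [this]
    rw [hjs, pow_succ]
    have hbase : (y+1) + (j:ℝ) - s = y + (j:ℝ) + 1 - s := by ring
    rw [hbase]
    linear_combination (-(abelC s * (y + (j:ℝ) + 1 - (s:ℝ))^(j-s))) * hcast
  rw [Finset.sum_congr rfl step, Finset.sum_sub_distrib]
  have hA1 := abel_A (j+1) y
  rw [Finset.sum_range_succ] at hA1
  push_cast at hA1
  have h1 : ∑ s ∈ range (j+1), ((j+1).choose s : ℝ) * abelC s * (y + ((j:ℝ)+1) - s)^(j+1-s)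
      = (y + (j:ℝ) + 1 + 1)^(j+1) - abelC (j+1) := by
    have hlast : ((j+1).choose (j+1) : ℝ) * abelC (j+1)
        * (y + ((j:ℝ)+1) - ((j:ℝ)+1))^(j-j) = abelC (j+1) := by
      simp [Nat.choose_self]
    have hassoc : (y + ((j:ℝ)+1) + 1) ^ (j+1) = (y + (j:ℝ) + 1 + 1)^(j+1) := by ring
    linarith [hA1, hlast, hassoc]
  have hA2 := abel_A j (y+1)
  have h2 : ∑ s ∈ range (j+1), ((j+1:ℕ):ℝ) * ((j.choose s : ℝ) * abelC s * ((y+1) + (j:ℝ) - s)^(j-s))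
      = ((j+1:ℕ):ℝ) * ((y+1) + (j:ℝ) + 1)^j := by
    rw [← Finset.mul_sum, hA2]
  rw [h1, h2]
  have hp : (y + (j:ℝ) + 1 + 1)^(j+1) = (y + (j:ℝ) + 2)^j * (y + (j:ℝ) + 2) := by
    rw [← pow_succ]
    ring
  push_cast
  rw [hp]
  ring


lemma abelC_z (s : ℕ) : ((s:ℝ)+1) ^ ((s:ℤ)-1) = abelC s := by
  have h1 : ((s:ℝ)+1) ≠ 0 := by positivity
  rw [abelC, zpow_sub₀ h1, zpow_one, zpow_natCast]

/-- For `1 ≤ m ≤ n`, in `ℝ` (powers with possibly negative integer exponents are `zpow`):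
`Σ_{s=0}^{m-1} C(m-1,s)·(n-s)^(m-s-2)·(s+1)^(s-1) = ((n-m+2)/(n-m+1))·(n+1)^(m-2)`. -/
theorem abel_sum_minus_one_minus_one (m n : ℕ) (hm : 1 ≤ m) (hmn : m ≤ n) :
    (∑ s ∈ Finset.range m,
        ((m - 1).choose s : ℝ) * ((n : ℝ) - s) ^ ((m : ℤ) - s - 2)
          * ((s : ℝ) + 1) ^ ((s : ℤ) - 1))
      = (((n : ℝ) - m + 2) / ((n : ℝ) - m + 1)) * ((n : ℝ) + 1) ^ ((m : ℤ) - 2) := by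
  obtain ⟨k, rfl⟩ : ∃ k, m = k+1 := ⟨m-1, by omega⟩
  simp only [Nat.add_sub_cancel, abelC_z]
  match k with
  | 0 =>
    have hn : (1:ℝ) ≤ (n:ℝ) := by exact_mod_cast hmn
    have hn0 : (n:ℝ) ≠ 0 := by linarith
    have hn1 : (n:ℝ) + 1 ≠ 0 := by linarith
    rw [Finset.sum_range_one]
    norm_num [abelC]
    rw [show (n:ℝ) - 1 + 2 = (n:ℝ)+1 from by ring]
    field_simp
  | (j+1) =>
    set y : ℝ := (n:ℝ) - ((j:ℝ)+1) with hy
    have hy1 : (1:ℝ) ≤ y := by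
      rw [hy]
      have : ((j:ℝ)+2) ≤ (n:ℝ) := by exact_mod_cast hmn
      linarith
    have hy0 : y ≠ 0 := by linarith
    rw [Finset.sum_range_succ]
    have hmain : ∀ s ∈ range (j+1),
        ((j+1).choose s : ℝ) * ((n : ℝ) - s) ^ (((j+1+1:ℕ) : ℤ) - s - 2) * abelC s
          = ((j+1).choose s : ℝ) * abelC s * (y + (j:ℝ) + 1 - s)^(j-s) := by
      intro s hs
      have hs' : s ≤ j := by simpa [Nat.lt_succ_iff] using hs
      have hexp : (((j+1+1:ℕ) : ℤ) - s - 2) = ((j-s : ℕ) : ℤ) := by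
        push_cast [Nat.cast_sub hs']
        ring
      have hbase : (n : ℝ) - s = y + (j:ℝ) + 1 - s := by rw [hy]; ring
      rw [hexp, zpow_natCast, hbase]
      ring
    rw [Finset.sum_congr rfl hmain]
    have hlast : ((j+1+1-1).choose (j+1) : ℝ) = 1 := by norm_num
    have hexp2 : (((j+1+1:ℕ) : ℤ) - ((j+1:ℕ):ℤ) - 2) = -1 := by push_cast; ring
    have hbase2 : (n : ℝ) - ((j+1:ℕ):ℝ) = y := by rw [hy]; push_cast; ring
    have hB := abel_B j y
    have hrhs1 : ((n : ℝ) - ((j+1+1:ℕ):ℝ) + 2) = y + 1 := by rw [hy]; push_cast; ring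
    have hrhs2 : ((n : ℝ) - ((j+1+1:ℕ):ℝ) + 1) = y := by rw [hy]; push_cast; ring
    have hrhs3 : ((n:ℝ) + 1) ^ (((j+1+1:ℕ):ℤ) - 2) = (y + (j:ℝ) + 2)^j := by
      rw [show (((j+1+1:ℕ):ℤ) - 2) = ((j:ℕ):ℤ) from by push_cast; ring, zpow_natCast]
      rw [hy]; ring_nf
    push_cast at hlast hexp2 hbase2 hrhs1 hrhs2 hrhs3 ⊢
    rw [hlast, hexp2, hbase2, hrhs1, hrhs2, hrhs3, zpow_neg_one]
    field_simp
    linear_combination hB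
end

section
/- For all integers 1 ≤ m ≤ n, the following identity holds in ℝ: Σ_{s=0}^{m-1} s·C(m-1,s)·(n-s)^{m-s-2}·(s+1)^{s-1} = (m-1)·(n+1)^{m-2}/(n-m+1). -/
open Finset

/-- Alternating binomial sum of shifted powers. -/
noncomputable def fdS (M d : ℕ) (x : ℝ) : ℝ :=
  ∑ k ∈ Finset.range (M + 1), (-1 : ℝ) ^ k * (M.choose k : ℝ) * (x + k) ^ d

lemma fdS_succ (M d : ℕ) (x : ℝ) : fdS (M + 1) d x = fdS M d x - fdS M d (x + 1) := by
  have expand : fdS (M + 1) d x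
      = ∑ k ∈ Finset.range (M + 1 + 1), (-1 : ℝ) ^ k * ((M+1).choose k : ℝ) * (x + k) ^ d := rfl
  rw [expand,
    Finset.sum_range_succ' (fun k => (-1 : ℝ) ^ k * ((M+1).choose k : ℝ) * (x + k) ^ d) (M+1)]
  have h1 : ∀ k, ((M+1).choose (k+1) : ℝ) = (M.choose k : ℝ) + (M.choose (k+1) : ℝ) := by
    intro k; rw [Nat.choose_succ_succ]; push_cast; ring
  have key : ∀ k ∈ Finset.range (M+1),
      (-1 : ℝ) ^ (k+1) * ((M+1).choose (k+1) : ℝ) * (x + ↑(k+1)) ^ d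
      = -((-1 : ℝ) ^ k * (M.choose k : ℝ) * ((x+1) + k) ^ d)
        + (-((-1 : ℝ) ^ k * (M.choose (k+1) : ℝ) * (x + ↑(k+1)) ^ d)) := by
    intro k _
    rw [h1]
    push_cast
    ring
  rw [Finset.sum_congr rfl key, Finset.sum_add_distrib]
  have h2 : ∑ k ∈ Finset.range (M+1), -((-1:ℝ)^k * (M.choose k : ℝ) * ((x+1)+k)^d)
      = - fdS M d (x+1) := by
    unfold fdS; rw [← Finset.sum_neg_distrib]
  have h3 : ∑ k ∈ Finset.range (M+1), (-((-1:ℝ)^k * (M.choose (k+1) : ℝ) * (x + ↑(k+1))^d))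
      = fdS M d x - (-1:ℝ)^0 * (M.choose 0 : ℝ) * (x + ((0:ℕ):ℝ)) ^ d := by
    have e1 : ∀ k ∈ Finset.range (M+1),
        -((-1:ℝ)^k * (M.choose (k+1) : ℝ) * (x + ↑(k+1))^d)
        = (-1:ℝ)^(k+1) * (M.choose (k+1) : ℝ) * (x + ↑(k+1))^d := by
      intro k _; ring
    rw [Finset.sum_congr rfl e1]
    have e2 := Finset.sum_range_succ' (fun k => (-1:ℝ)^k * (M.choose k : ℝ) * (x + k)^d) M
    have e3 : fdS M d x
        = ∑ k ∈ Finset.range (M+1), (-1:ℝ)^k * (M.choose k : ℝ) * (x + k)^d := rfl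
    rw [Finset.sum_range_succ (fun k => (-1:ℝ)^(k+1) * (M.choose (k+1) : ℝ) * (x + ↑(k+1))^d) M]
    simp only [Nat.choose_succ_self, Nat.cast_zero, mul_zero, zero_mul, add_zero]
    rw [e3, e2]
    push_cast
    ring
  rw [h2, h3]
  simp only [Nat.choose_zero_right, Nat.cast_one, Nat.cast_zero, pow_zero, one_mul, mul_one, add_zero]
  ring

lemma fdS_shift (M d : ℕ) (x : ℝ) :
    fdS M d (x + 1) = ∑ i ∈ Finset.range (d + 1), (d.choose i : ℝ) * fdS M i x := by
  unfold fdS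
  have key : ∀ k ∈ Finset.range (M + 1),
      (-1:ℝ)^k * (M.choose k : ℝ) * (x + 1 + k)^d
      = ∑ i ∈ Finset.range (d+1), (d.choose i : ℝ) * ((-1:ℝ)^k * (M.choose k : ℝ) * (x + k)^i) := by
    intro k _
    have hb : ((x + k) + 1)^d = ∑ i ∈ Finset.range (d+1), (x+k)^i * 1^(d-i) * (d.choose i : ℝ) :=
      add_pow (x + k) 1 d
    have : (x + 1 + k : ℝ) = (x + k) + 1 := by ring
    rw [this, hb, Finset.mul_sum]
    exact Finset.sum_congr rfl (fun i _ => by ring)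
  rw [Finset.sum_congr rfl key, Finset.sum_comm]
  exact Finset.sum_congr rfl (fun i _ => by rw [Finset.mul_sum])

lemma fd_eval : ∀ (M : ℕ) (d : ℕ) (x : ℝ), d ≤ M →
    fdS M d x = if d = M then (-1:ℝ)^M * (M.factorial : ℝ) else 0 := by
  intro M
  induction M with
  | zero =>
      intro d x hd
      interval_cases d
      simp [fdS]
  | succ M ih =>
      intro d x hd
      have step : fdS (M+1) d x = - ∑ i ∈ Finset.range d, (d.choose i : ℝ) * fdS M i x := by
        rw [fdS_succ, fdS_shift, Finset.sum_range_succ, Nat.choose_self]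
        push_cast
        ring
      rw [step]
      have hterm : ∀ i ∈ Finset.range d, (d.choose i : ℝ) * fdS M i x
          = if i = M then (d.choose M : ℝ) * ((-1:ℝ)^M * (M.factorial : ℝ)) else 0 := by
        intro i hi
        rw [Finset.mem_range] at hi
        rw [ih i x (by omega)]
        by_cases h : i = M <;> simp [h]
      rw [Finset.sum_congr rfl hterm, Finset.sum_ite_eq' (Finset.range d)]
      by_cases hdm : d = M + 1
      · subst hdm
        rw [if_pos (Finset.mem_range.mpr (Nat.lt_succ_self M)), if_pos rfl,
          Nat.choose_succ_self_right, Nat.factorial_succ]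
        push_cast
        ring
      · have : ¬ (M ∈ Finset.range d) := by
          rw [Finset.mem_range]; omega
        rw [if_neg this, if_neg hdm, neg_zero]

lemma expand_pow (e n : ℕ) (he : e ≤ n) (a b : ℝ) :
    (a - b) ^ e = ∑ j ∈ Finset.range (n + 1),
      (e.choose j : ℝ) * (-1) ^ (e - j) * b ^ (e - j) * a ^ j := by
  rw [sub_pow]
  rw [← Finset.sum_subset (Finset.range_subset_range.mpr (by omega : e + 1 ≤ n + 1))]
  · apply Finset.sum_congr rfl
    intro j hj
    rw [Finset.mem_range] at hj
    have hsgn : (-1:ℝ) ^ (j + e) = (-1:ℝ) ^ (e - j) := by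
      rw [show j + e = (e - j) + 2 * j by omega, pow_add, pow_mul]
      simp
    rw [hsgn]; ring
  · intro j _ hj
    rw [Finset.mem_range] at hj
    rw [Nat.choose_eq_zero_of_lt (by omega)]
    simp

lemma choose_swap {n k j : ℕ} (h : k + j ≤ n) :
    n.choose k * (n - k).choose j = n.choose j * (n - j).choose k := by
  have h1 := Nat.choose_mul (n := n) (show k ≤ k + j by omega)
  have h2 := Nat.choose_mul (n := n) (show j ≤ k + j by omega)
  have hs : (k + j).choose k = (k + j).choose j := by
    have := Nat.choose_symm (show j ≤ k + j by omega)
    simpa using this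
  simp only [Nat.add_sub_cancel, Nat.add_sub_cancel_left] at h1 h2
  rw [← h1, hs, h2]

lemma neg_one_pow_sub {a k : ℕ} (h : k ≤ a) : (-1:ℝ) ^ (a - k) = (-1:ℝ) ^ a * (-1:ℝ) ^ k := by
  rw [show a = (a - k) + k by omega, pow_add]
  rw [show a - k + k - k = a - k by omega]
  rw [mul_assoc, ← pow_add]
  simp [pow_add]
  rw [← pow_add]
  simp [show k + k = 2 * k by omega, pow_mul]

lemma sum_g_eval (n j : ℕ) (hj : j ≤ n) (x : ℝ) :
    ∑ k ∈ Finset.range (n + 1),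
        (n.choose j : ℝ) * ((n - j).choose k : ℝ) * (-1) ^ (n - j - k) * (x + k) ^ (n - j)
      = (n.choose j : ℝ) * ((n - j).factorial : ℝ) := by
  rw [← Finset.sum_subset (Finset.range_subset_range.mpr (by omega : (n - j) + 1 ≤ n + 1))]
  · have : ∀ k ∈ Finset.range (n - j + 1),
        (n.choose j : ℝ) * ((n - j).choose k : ℝ) * (-1) ^ (n - j - k) * (x + k) ^ (n - j)
        = ((n.choose j : ℝ) * (-1) ^ (n - j)) *
            ((-1:ℝ) ^ k * ((n - j).choose k : ℝ) * (x + k) ^ (n - j)) := by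
      intro k hk
      rw [Finset.mem_range] at hk
      rw [neg_one_pow_sub (by omega : k ≤ n - j)]
      ring
    rw [Finset.sum_congr rfl this, ← Finset.mul_sum]
    have hf : (∑ k ∈ Finset.range (n - j + 1),
        (-1:ℝ) ^ k * ((n - j).choose k : ℝ) * (x + k) ^ (n - j)) = fdS (n - j) (n - j) x := rfl
    rw [hf, fd_eval _ _ _ le_rfl, if_pos rfl]
    have : (-1:ℝ) ^ (n - j) * ((-1:ℝ) ^ (n - j) * ((n - j).factorial : ℝ))
        = ((n - j).factorial : ℝ) := by
      rw [← mul_assoc, ← pow_add, show (n-j) + (n-j) = 2 * (n-j) by omega, pow_mul]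
      simp
    rw [mul_assoc, this]
  · intro k hk hk2
    rw [Finset.mem_range] at hk hk2
    rw [Nat.choose_eq_zero_of_lt (by omega : n - j < k)]
    simp

lemma A_eval (n j : ℕ) (hj : j ≤ n) (x : ℝ) :
    ∑ k ∈ Finset.range n, (n.choose k : ℝ) * (x + k) ^ k *
        (((n - k).choose j : ℝ) * (-1) ^ (n - k - j) * (x + k) ^ (n - k - j))
      = (n.choose j : ℝ) * ((n - j).factorial : ℝ) - (if j = 0 then (x + n) ^ n else 0) := by
  have key : ∀ k ∈ Finset.range n,
      (n.choose k : ℝ) * (x + k) ^ k *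
        (((n - k).choose j : ℝ) * (-1) ^ (n - k - j) * (x + k) ^ (n - k - j))
      = (n.choose j : ℝ) * ((n - j).choose k : ℝ) * (-1) ^ (n - j - k) * (x + k) ^ (n - j) := by
    intro k hk
    rw [Finset.mem_range] at hk
    by_cases hkj : k + j ≤ n
    · have hc : (n.choose k : ℝ) * ((n - k).choose j : ℝ)
          = (n.choose j : ℝ) * ((n - j).choose k : ℝ) := by
        exact_mod_cast congrArg (fun t : ℕ => (t : ℝ)) (choose_swap hkj)
      have hp : (x + (k:ℝ)) ^ (n - j) = (x + k) ^ k * (x + k) ^ (n - k - j) := by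
        rw [← pow_add]; congr 1; omega
      have hs : (n - j - k) = (n - k - j) := by omega
      rw [hp, hs]
      linear_combination ((-1:ℝ) ^ (n - k - j) * ((x + (k:ℝ)) ^ k * (x + k) ^ (n - k - j))) * hc
    · rw [Nat.choose_eq_zero_of_lt (by omega : n - k < j),
        Nat.choose_eq_zero_of_lt (by omega : n - j < k)]
      simp
  rw [Finset.sum_congr rfl key]
  have hsplit := Finset.sum_range_succ
    (fun k => (n.choose j : ℝ) * ((n - j).choose k : ℝ) * (-1) ^ (n - j - k) * (x + k) ^ (n - j)) n
  have : ∑ k ∈ Finset.range n,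
      (n.choose j : ℝ) * ((n - j).choose k : ℝ) * (-1) ^ (n - j - k) * (x + k) ^ (n - j)
      = (n.choose j : ℝ) * ((n - j).factorial : ℝ)
        - (n.choose j : ℝ) * ((n - j).choose n : ℝ) * (-1) ^ (n - j - n) * (x + n) ^ (n - j) := by
    rw [eq_sub_iff_add_eq, ← hsplit, sum_g_eval n j hj x]
  rw [this]
  congr 1
  by_cases hj0 : j = 0
  · subst hj0
    simp [Nat.choose_self]
  · rw [if_neg hj0, Nat.choose_eq_zero_of_lt (by omega : n - j < n)]
    simp

lemma choose_mul_sub (n k : ℕ) (hn : 1 ≤ n) (hk : k ≤ n - 1) :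
    (n - k) * n.choose k = n * (n - 1).choose k := by
  have h1 := Nat.choose_succ_right_eq n k
  have h2 := Nat.add_one_mul_choose_eq (n - 1) k
  simp only [Nat.succ_eq_add_one, Nat.sub_add_cancel hn] at h2
  rw [h2, h1]
  exact Nat.mul_comm _ _

lemma B_eval (n j : ℕ) (hn : 1 ≤ n) (hj : j ≤ n - 1) (x : ℝ) :
    ∑ k ∈ Finset.range n, (n.choose k : ℝ) * (x + k) ^ k *
        (((n - k : ℕ) : ℝ) * ((n - k - 1).choose j : ℝ) * (-1) ^ (n - k - 1 - j)
          * (x + k) ^ (n - k - 1 - j))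
      = (n : ℝ) * (((n - 1).choose j : ℝ) * (((n - 1) - j).factorial : ℝ)) := by
  have key : ∀ k ∈ Finset.range n,
      (n.choose k : ℝ) * (x + k) ^ k *
        (((n - k : ℕ) : ℝ) * ((n - k - 1).choose j : ℝ) * (-1) ^ (n - k - 1 - j)
          * (x + k) ^ (n - k - 1 - j))
      = (n : ℝ) * (((n - 1).choose j : ℝ) * (((n - 1) - j).choose k : ℝ)
          * (-1) ^ ((n - 1) - j - k) * (x + k) ^ ((n - 1) - j)) := by
    intro k hk
    rw [Finset.mem_range] at hk
    by_cases hkj : k + j ≤ n - 1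
    · have hc1 : ((n - k : ℕ) : ℝ) * (n.choose k : ℝ) = (n : ℝ) * ((n - 1).choose k : ℝ) := by
        exact_mod_cast congrArg (fun t : ℕ => (t : ℝ)) (choose_mul_sub n k hn (by omega))
      have hc2 : ((n - 1).choose k : ℝ) * (((n - 1) - k).choose j : ℝ)
          = ((n - 1).choose j : ℝ) * (((n - 1) - j).choose k : ℝ) := by
        exact_mod_cast congrArg (fun t : ℕ => (t : ℝ)) (choose_swap hkj)
      have he : (n - k - 1) = ((n - 1) - k) := by omega
      rw [he]
      have hp : (x + (k : ℝ)) ^ ((n - 1) - j) = (x + k) ^ k * (x + k) ^ ((n - 1) - k - j) := by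
        rw [← pow_add]; congr 1; omega
      have hs : ((n - 1) - j - k) = ((n - 1) - k - j) := by omega
      rw [hp, hs]
      linear_combination
        ((-1:ℝ) ^ ((n - 1) - k - j) * (x + (k:ℝ)) ^ k * (x + k) ^ ((n - 1) - k - j)
          * (((n - 1) - k).choose j : ℝ)) * hc1
        + ((n : ℝ) * (-1:ℝ) ^ ((n - 1) - k - j) * (x + (k:ℝ)) ^ k
          * (x + k) ^ ((n - 1) - k - j)) * hc2
    · rw [Nat.choose_eq_zero_of_lt (by omega : n - k - 1 < j),
        Nat.choose_eq_zero_of_lt (by omega : (n - 1) - j < k)]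
      simp
  rw [Finset.sum_congr rfl key, ← Finset.mul_sum]
  congr 1
  have hr : n = (n - 1) + 1 := by omega
  rw [hr]
  exact sum_g_eval (n - 1) j hj x

lemma fact_id (n j : ℕ) (hn : 1 ≤ n) (hj : j ≤ n - 1) :
    n.choose j * (n - j).factorial = n * ((n - 1).choose j * ((n - 1) - j).factorial) := by
  have h1 : n.choose j * j.factorial * (n - j).factorial = n.factorial :=
    Nat.choose_mul_factorial_mul_factorial (by omega)
  have h2 : (n - 1).choose j * j.factorial * ((n - 1) - j).factorial = (n - 1).factorial :=
    Nat.choose_mul_factorial_mul_factorial (by omega)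
  have h3 : n * (n - 1).factorial = n.factorial := Nat.mul_factorial_pred (by omega)
  have hj0 : 0 < j.factorial := Nat.factorial_pos j
  apply Nat.eq_of_mul_eq_mul_right hj0
  calc n.choose j * (n - j).factorial * j.factorial = n.factorial := by rw [← h1]; ring
    _ = n * (n - 1).factorial := h3.symm
    _ = n * ((n - 1).choose j * ((n - 1) - j).factorial) * j.factorial := by rw [← h2]; ring

lemma Oy (n : ℕ) (x y : ℝ) :
    (∑ k ∈ Finset.range n, (n.choose k : ℝ) * (x + k) ^ k *
        (y * (y + ((n - k : ℕ) : ℝ)) ^ (n - k - 1))) + (x + (n : ℝ)) ^ n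
      = (x + y + (n : ℝ)) ^ n := by
  rcases Nat.eq_zero_or_pos n with h0 | hn
  · subst h0; simp
  have key : ∀ k ∈ Finset.range n,
      (n.choose k : ℝ) * (x + k) ^ k * (y * (y + ((n - k : ℕ) : ℝ)) ^ (n - k - 1))
      = ∑ j ∈ Finset.range (n + 1),
          ((n.choose k : ℝ) * (x + k) ^ k *
              (((n - k).choose j : ℝ) * (-1) ^ (n - k - j) * (x + k) ^ (n - k - j))
           - (n.choose k : ℝ) * (x + k) ^ k *
              (((n - k : ℕ) : ℝ) * ((n - k - 1).choose j : ℝ) * (-1) ^ (n - k - 1 - j)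
                * (x + k) ^ (n - k - 1 - j))) * (x + y + (n : ℝ)) ^ j := by
    intro k hk
    rw [Finset.mem_range] at hk
    have hcast : (y + ((n - k : ℕ) : ℝ)) = (x + y + (n : ℝ)) - (x + k) := by
      push_cast [Nat.cast_sub hk.le]; ring
    have hy : y * (y + ((n - k : ℕ) : ℝ)) ^ (n - k - 1)
        = (y + ((n - k : ℕ) : ℝ)) ^ (n - k)
          - ((n - k : ℕ) : ℝ) * (y + ((n - k : ℕ) : ℝ)) ^ (n - k - 1) := by
      rw [show n - k = (n - k - 1) + 1 by omega, pow_succ]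
      push_cast [Nat.cast_sub hk.le]
      ring
    rw [hy, hcast,
      expand_pow (n - k) n (by omega) (x + y + (n : ℝ)) (x + k),
      expand_pow (n - k - 1) n (by omega) (x + y + (n : ℝ)) (x + k),
      Finset.mul_sum, mul_sub, Finset.mul_sum, Finset.mul_sum, ← Finset.sum_sub_distrib]
    exact Finset.sum_congr rfl (fun j _ => by ring)
  rw [Finset.sum_congr rfl key, Finset.sum_comm]
  have evalj : ∀ j ∈ Finset.range (n + 1),
      (∑ k ∈ Finset.range n,
          ((n.choose k : ℝ) * (x + k) ^ k *
              (((n - k).choose j : ℝ) * (-1) ^ (n - k - j) * (x + k) ^ (n - k - j))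
           - (n.choose k : ℝ) * (x + k) ^ k *
              (((n - k : ℕ) : ℝ) * ((n - k - 1).choose j : ℝ) * (-1) ^ (n - k - 1 - j)
                * (x + k) ^ (n - k - 1 - j))) * (x + y + (n : ℝ)) ^ j)
      = (if j = n then (x + y + (n : ℝ)) ^ n else 0)
        + (if j = 0 then -((x + (n : ℝ)) ^ n) else 0) := by
    intro j hj
    rw [Finset.mem_range] at hj
    rw [← Finset.sum_mul, Finset.sum_sub_distrib]
    by_cases hjn : j = n
    · rw [hjn]
      rw [A_eval n n le_rfl x]
      have hB : (∑ k ∈ Finset.range n, (n.choose k : ℝ) * (x + k) ^ k *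
          (((n - k : ℕ) : ℝ) * ((n - k - 1).choose n : ℝ) * (-1) ^ (n - k - 1 - n)
            * (x + k) ^ (n - k - 1 - n))) = 0 := by
        apply Finset.sum_eq_zero
        intro k hk
        rw [Finset.mem_range] at hk
        rw [Nat.choose_eq_zero_of_lt (by omega : n - k - 1 < n)]
        simp
      rw [hB]
      rw [if_pos rfl, if_neg (by omega : ¬ n = 0), if_neg (by omega : ¬ n = 0)]
      simp [Nat.choose_self, Nat.sub_self, Nat.factorial_zero]
    · have hjn1 : j ≤ n - 1 := by omega
      rw [A_eval n j (by omega) x, B_eval n j hn hjn1 x]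
      have hfac : (n.choose j : ℝ) * ((n - j).factorial : ℝ)
          = (n : ℝ) * (((n - 1).choose j : ℝ) * (((n - 1) - j).factorial : ℝ)) := by
        exact_mod_cast congrArg (fun t : ℕ => (t : ℝ)) (fact_id n j hn hjn1)
      rw [if_neg hjn]
      by_cases hj0 : j = 0
      · subst hj0
        rw [if_pos rfl, if_pos rfl]
        rw [hfac]
        ring
      · rw [if_neg hj0, if_neg hj0, hfac]
        ring
  rw [Finset.sum_congr rfl evalj, Finset.sum_add_distrib,
    Finset.sum_ite_eq' (Finset.range (n + 1)) n,
    Finset.sum_ite_eq' (Finset.range (n + 1)) 0]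
  rw [if_pos (Finset.mem_range.mpr (by omega)), if_pos (Finset.mem_range.mpr (by omega))]
  ring


/-- For `1 ≤ m ≤ n`, in `ℝ` (powers with possibly negative integer exponents are `zpow`):
`Σ_{s=0}^{m-1} s·C(m-1,s)·(n-s)^(m-s-2)·(s+1)^(s-1) = (m-1)·(n+1)^(m-2)/(n-m+1)`. -/
theorem abel_sum_weighted (m n : ℕ) (hm : 1 ≤ m) (hmn : m ≤ n) :
    (∑ s ∈ Finset.range m,
        (s : ℝ) * ((m - 1).choose s : ℝ) * ((n : ℝ) - s) ^ ((m : ℤ) - s - 2)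
          * ((s : ℝ) + 1) ^ ((s : ℤ) - 1))
      = ((m : ℝ) - 1) * ((n : ℝ) + 1) ^ ((m : ℤ) - 2) / ((n : ℝ) - m + 1) := by
  obtain rfl | h2 : m = 1 ∨ 2 ≤ m := by omega
  · norm_num
  obtain ⟨N, rfl⟩ : ∃ N, m = N + 2 := ⟨m - 2, by omega⟩
  have hy1 : (1 : ℝ) ≤ (n : ℝ) - ((N + 2 : ℕ) : ℝ) + 1 := by
    have : ((N + 2 : ℕ) : ℝ) ≤ (n : ℝ) := by exact_mod_cast hmn
    linarith
  set y : ℝ := (n : ℝ) - ((N + 2 : ℕ) : ℝ) + 1 with hydef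
  have hy0 : y ≠ 0 := by intro h; rw [h] at hy1; linarith
  rw [eq_div_iff hy0]
  rw [Finset.sum_range_succ'
    (fun s => (s : ℝ) * ((N + 2 - 1).choose s : ℝ) * ((n : ℝ) - s) ^ (((N + 2 : ℕ) : ℤ) - s - 2)
      * ((s : ℝ) + 1) ^ ((s : ℤ) - 1)) (N + 1)]
  rw [Finset.sum_range_succ
    (fun t => ((t + 1 : ℕ) : ℝ) * ((N + 2 - 1).choose (t + 1) : ℝ)
      * ((n : ℝ) - ((t + 1 : ℕ) : ℝ)) ^ (((N + 2 : ℕ) : ℤ) - ((t + 1 : ℕ) : ℤ) - 2)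
      * (((t + 1 : ℕ) : ℝ) + 1) ^ (((t + 1 : ℕ) : ℤ) - 1)) N]
  have hf0 : ((0 : ℕ) : ℝ) * ((N + 2 - 1).choose 0 : ℝ)
      * ((n : ℝ) - ((0 : ℕ) : ℝ)) ^ (((N + 2 : ℕ) : ℤ) - ((0 : ℕ) : ℤ) - 2)
      * (((0 : ℕ) : ℝ) + 1) ^ (((0 : ℕ) : ℤ) - 1) = 0 := by
    norm_num
  have hkey : ∀ t ∈ Finset.range N,
      ((t + 1 : ℕ) : ℝ) * ((N + 2 - 1).choose (t + 1) : ℝ)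
        * ((n : ℝ) - ((t + 1 : ℕ) : ℝ)) ^ (((N + 2 : ℕ) : ℤ) - ((t + 1 : ℕ) : ℤ) - 2)
        * (((t + 1 : ℕ) : ℝ) + 1) ^ (((t + 1 : ℕ) : ℤ) - 1)
      = ((N : ℝ) + 1) * ((N.choose t : ℝ) * ((2 : ℝ) + t) ^ t
          * (y + ((N - t : ℕ) : ℝ)) ^ (N - t - 1)) := by
    intro t ht
    rw [Finset.mem_range] at ht
    have he1 : (((N + 2 : ℕ) : ℤ) - ((t + 1 : ℕ) : ℤ) - 2) = ((N - t - 1 : ℕ) : ℤ) := by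
      push_cast [Nat.cast_sub ht.le, Nat.cast_sub (by omega : 1 ≤ N - t)]
      ring
    have he2 : (((t + 1 : ℕ) : ℤ) - 1) = ((t : ℕ) : ℤ) := by push_cast; ring
    rw [he1, he2, zpow_natCast, zpow_natCast]
    have hco : ((t + 1 : ℕ) : ℝ) * ((N + 2 - 1).choose (t + 1) : ℝ)
        = ((N : ℝ) + 1) * (N.choose t : ℝ) := by
      have := Nat.add_one_mul_choose_eq N t
      have hcast : ((N + 1) * N.choose t : ℕ) = ((N + 1).choose (t + 1) * (t + 1) : ℕ) := by
        simpa [Nat.succ_eq_add_one] using this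
      have : (((N + 1) * N.choose t : ℕ) : ℝ) = (((N + 1).choose (t + 1) * (t + 1) : ℕ) : ℝ) := by
        exact_mod_cast congrArg (fun z : ℕ => (z : ℝ)) hcast
      push_cast at this
      push_cast
      show ((t : ℝ) + 1) * ((N + 1).choose (t + 1) : ℝ) = ((N : ℝ) + 1) * (N.choose t : ℝ)
      linarith [this]
    have hbase : ((n : ℝ) - ((t + 1 : ℕ) : ℝ)) = y + ((N - t : ℕ) : ℝ) := by
      rw [hydef]
      push_cast [Nat.cast_sub ht.le]
      ring
    have hbase2 : (((t + 1 : ℕ) : ℝ) + 1) = (2 : ℝ) + t := by push_cast; ring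
    rw [hco, hbase, hbase2]
    ring
  rw [Finset.sum_congr rfl hkey, hf0, add_zero, ← Finset.mul_sum]
  -- boundary term t = N
  have hbound : ((N + 1 : ℕ) : ℝ) * ((N + 2 - 1).choose (N + 1) : ℝ)
      * ((n : ℝ) - ((N + 1 : ℕ) : ℝ)) ^ (((N + 2 : ℕ) : ℤ) - ((N + 1 : ℕ) : ℤ) - 2)
      * (((N + 1 : ℕ) : ℝ) + 1) ^ (((N + 1 : ℕ) : ℤ) - 1)
      = ((N : ℝ) + 1) * ((2 : ℝ) + N) ^ N * y⁻¹ := by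
    have he1 : (((N + 2 : ℕ) : ℤ) - ((N + 1 : ℕ) : ℤ) - 2) = (-1 : ℤ) := by push_cast; ring
    have he2 : (((N + 1 : ℕ) : ℤ) - 1) = ((N : ℕ) : ℤ) := by push_cast; ring
    have hb : ((n : ℝ) - ((N + 1 : ℕ) : ℝ)) = y := by rw [hydef]; push_cast; ring
    rw [he1, he2, zpow_natCast, hb, zpow_neg_one]
    have : (N + 2 - 1).choose (N + 1) = 1 := by
      simp [show N + 2 - 1 = N + 1 by omega]
    rw [this]
    push_cast
    ring
  rw [hbound]
  -- use Oy
  have hOy := Oy N 2 y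
  have hsum : (∑ t ∈ Finset.range N, (N.choose t : ℝ) * ((2 : ℝ) + t) ^ t
        * (y + ((N - t : ℕ) : ℝ)) ^ (N - t - 1)) * y
      = ((2 : ℝ) + y + N) ^ N - ((2 : ℝ) + N) ^ N := by
    rw [Finset.sum_mul]
    have : ∀ t ∈ Finset.range N,
        (N.choose t : ℝ) * ((2 : ℝ) + t) ^ t * (y + ((N - t : ℕ) : ℝ)) ^ (N - t - 1) * y
        = (N.choose t : ℝ) * ((2 : ℝ) + t) ^ t * (y * (y + ((N - t : ℕ) : ℝ)) ^ (N - t - 1)) := by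
      intro t _; ring
    rw [Finset.sum_congr rfl this]
    linarith [hOy]
  have hrhs : (((N + 2 : ℕ) : ℝ) - 1) * ((n : ℝ) + 1) ^ (((N + 2 : ℕ) : ℤ) - 2)
      = ((N : ℝ) + 1) * ((n : ℝ) + 1) ^ (N : ℕ) := by
    have he : (((N + 2 : ℕ) : ℤ) - 2) = ((N : ℕ) : ℤ) := by push_cast; ring
    rw [he, zpow_natCast]
    push_cast
    ring
  rw [hrhs]
  have hny : (2 : ℝ) + y + N = (n : ℝ) + 1 := by rw [hydef]; push_cast; ring
  have hyy : y⁻¹ * y = 1 := inv_mul_cancel₀ hy0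
  calc (((N : ℝ) + 1) * ∑ t ∈ Finset.range N, (N.choose t : ℝ) * ((2 : ℝ) + t) ^ t
          * (y + ((N - t : ℕ) : ℝ)) ^ (N - t - 1)
        + ((N : ℝ) + 1) * ((2 : ℝ) + N) ^ N * y⁻¹) * y
      = ((N : ℝ) + 1) * ((∑ t ∈ Finset.range N, (N.choose t : ℝ) * ((2 : ℝ) + t) ^ t
          * (y + ((N - t : ℕ) : ℝ)) ^ (N - t - 1)) * y)
        + ((N : ℝ) + 1) * ((2 : ℝ) + N) ^ N * (y⁻¹ * y) := by ring
    _ = ((N : ℝ) + 1) * (((2 : ℝ) + y + N) ^ N - ((2 : ℝ) + N) ^ N)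
        + ((N : ℝ) + 1) * ((2 : ℝ) + N) ^ N * 1 := by rw [hsum, hyy]
    _ = ((N : ℝ) + 1) * ((2 : ℝ) + y + N) ^ N := by ring
    _ = ((N : ℝ) + 1) * ((n : ℝ) + 1) ^ (N : ℕ) := by rw [hny]
end

section
/- Fix c ∈ (0,1). There exist a constant C > 0 and N such that for every integer n ≥ N with m := cn a positive integer, one has | ((m-1)!/(n+1)^{m-1})·Σ_{s=0}^{m-1} (n+1)^{s}/s! − (1/(1−c))·(1 + (c^2−c−1)/(n(1−c)^2)) | ≤ C/n^2. -/
open Finset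

lemma stepA (m : ℕ) (hm : 1 ≤ m) (lam : ℝ) (hlam : 0 < lam) :
    ((m - 1).factorial : ℝ) / lam ^ (m - 1) *
        ∑ s ∈ Finset.range m, lam ^ s / (s.factorial : ℝ)
      = ∑ j ∈ Finset.range m, ((m - 1).descFactorial j : ℝ) / lam ^ j := by
  rw [Finset.mul_sum, ← Finset.sum_range_reflect]
  refine Finset.sum_congr rfl fun j hj => ?_
  rw [Finset.mem_range] at hj
  have h1 : (m - 1 - j).factorial * (m-1).descFactorial j = (m-1).factorial :=
    Nat.factorial_mul_descFactorial (by omega)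
  have h3 : lam ^ (m - 1) = lam ^ j * lam ^ (m - 1 - j) := by
    rw [← pow_add]; congr 1; omega
  have hfj : (0:ℝ) < ((m-1-j).factorial : ℝ) := by positivity
  rw [h3, ← h1]
  push_cast
  field_simp

lemma prod_one_sub_bounds (x : ℕ → ℝ) : ∀ j : ℕ, (∀ i < j, 0 ≤ x i) → (∀ i < j, x i ≤ 1) →
    (1 - ∑ i ∈ range j, x i ≤ ∏ i ∈ range j, (1 - x i) ∧
     ∏ i ∈ range j, (1 - x i) ≤ 1 - (∑ i ∈ range j, x i) + (∑ i ∈ range j, x i)^2/2) := by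
  intro j
  induction j with
  | zero => simp
  | succ j ih =>
    intro h0 h1
    obtain ⟨ihl, ihu⟩ := ih (fun i hi => h0 i (by omega)) (fun i hi => h1 i (by omega))
    have hS : 0 ≤ ∑ i ∈ range j, x i := sum_nonneg fun i hi => h0 i (by simp at hi; omega)
    have hP : 0 ≤ ∏ i ∈ range j, (1 - x i) := by
      apply prod_nonneg; intro i hi; simp at hi
      have := h1 i (by omega); linarith
    have hx0 : 0 ≤ x j := h0 j (by omega)
    have hx1 : x j ≤ 1 := h1 j (by omega)
    rw [prod_range_succ, sum_range_succ]
    constructor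
    · nlinarith [ihl, hS, hx0, hx1]
    · nlinarith [ihu, hS, hx0, hx1, hP]

lemma sum_lin (c : ℝ) : ∀ j : ℕ, ∑ i ∈ range j, (c + 1 + (i:ℝ)) = j*(c+1) + j*(j-1)/2 := by
  intro j
  induction j with
  | zero => simp
  | succ j ih => rw [sum_range_succ, ih]; push_cast; ring

lemma sumP (c : ℝ) (hc : c ≠ 1) : ∀ m : ℕ, ∑ j ∈ range m, (j:ℝ) * c^j
    = (c - c^m * (c + m*(1-c)))/(1-c)^2 := by
  intro m
  have h1 : (1:ℝ) - c ≠ 0 := by intro h; apply hc; linarith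
  induction m with
  | zero => simp
  | succ m ih => rw [sum_range_succ, ih]; push_cast; field_simp; ring

lemma sumQ (c : ℝ) (hc : c ≠ 1) : ∀ m : ℕ, ∑ j ∈ range m, (j:ℝ)^2 * c^j
    = (c*(1+c) - c^m * (c*(1+c) + 2*m*c*(1-c) + m^2*(1-c)^2))/(1-c)^3 := by
  intro m
  have h1 : (1:ℝ) - c ≠ 0 := by intro h; apply hc; linarith
  induction m with
  | zero => simp
  | succ m ih => rw [sum_range_succ, ih]; push_cast; field_simp; ring

lemma summable_shift (c : ℝ) (hc : 0 < c) (hc1 : c < 1) (p : ℕ) :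
    Summable (fun j : ℕ => ((j:ℝ)+1)^p * c^j) := by
  have hs : Summable (fun j : ℕ => (j:ℝ)^p * c^j) :=
    summable_pow_mul_geometric_of_norm_lt_one p (by rw [Real.norm_eq_abs, abs_of_pos hc]; exact hc1)
  have hs2 := (hs.mul_left (1/c))
  have hs3 := (summable_nat_add_iff 1).2 hs2
  apply hs3.congr
  intro j
  push_cast
  field_simp
  ring

lemma pow_le_tsum (c : ℝ) (hc : 0 < c) (hc1 : c < 1) (p : ℕ) (m : ℕ) :
    (m:ℝ)^p * c^m ≤ ∑' j : ℕ, (j:ℝ)^p * c^j := by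
  have hs : Summable (fun j : ℕ => (j:ℝ)^p * c^j) :=
    summable_pow_mul_geometric_of_norm_lt_one p (by rw [Real.norm_eq_abs, abs_of_pos hc]; exact hc1)
  exact Summable.le_tsum hs m (fun j _ => by positivity)


lemma term_bound (c lam : ℝ) (hc : 0 < c) (hc1 : c < 1) (hlam : 0 < lam) (x : ℕ → ℝ) (j : ℕ)
    (hx0 : ∀ i < j, 0 ≤ x i) (hx1 : ∀ i < j, x i ≤ 1)
    (hSval : ∑ i ∈ range j, x i = ((j:ℝ)*(c+1) + (j:ℝ)*((j:ℝ)-1)/2) / (c*lam)) :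
    |c ^ j * ∏ i ∈ range j, (1 - x i) - c ^ j * (1 - ∑ i ∈ range j, x i)|
      ≤ ((j:ℝ)+1)^4 * c^j / (2 * c^2 * lam^2) := by
  obtain ⟨hl, hu⟩ := prod_one_sub_bounds x j hx0 hx1
  have hcj : (0:ℝ) ≤ c ^ j := by positivity
  have key : |(∏ i ∈ range j, (1 - x i)) - (1 - ∑ i ∈ range j, x i)|
      ≤ (∑ i ∈ range j, x i)^2 / 2 := by
    rw [abs_le]
    refine ⟨by nlinarith [sq_nonneg (∑ i ∈ range j, x i)], by linarith⟩
  have heq : c ^ j * (∏ i ∈ range j, (1 - x i)) - c ^ j * (1 - ∑ i ∈ range j, x i)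
      = c ^ j * ((∏ i ∈ range j, (1 - x i)) - (1 - ∑ i ∈ range j, x i)) := by ring
  rw [heq, abs_mul, abs_of_nonneg hcj]
  have hj0 : (0:ℝ) ≤ (j:ℝ) := Nat.cast_nonneg j
  have hjj : 0 ≤ (j:ℝ)*((j:ℝ)-1) := by
    rcases Nat.eq_zero_or_pos j with h | h
    · simp [h]
    · have : (1:ℝ) ≤ (j:ℝ) := by exact_mod_cast h
      nlinarith
  have hu1 : (j:ℝ)*(c+1) + (j:ℝ)*((j:ℝ)-1)/2 ≤ ((j:ℝ)+1)^2 := by nlinarith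
  have hu0 : 0 ≤ (j:ℝ)*(c+1) + (j:ℝ)*((j:ℝ)-1)/2 := by nlinarith
  have hnum : ((j:ℝ)*(c+1) + (j:ℝ)*((j:ℝ)-1)/2)^2 ≤ ((j:ℝ)+1)^4 := by
    calc ((j:ℝ)*(c+1) + (j:ℝ)*((j:ℝ)-1)/2)^2 ≤ (((j:ℝ)+1)^2)^2 := by
          exact pow_le_pow_left₀ hu0 hu1 2
      _ = ((j:ℝ)+1)^4 := by ring
  have hSb : (∑ i ∈ range j, x i)^2 ≤ ((j:ℝ)+1)^4 / (c^2 * lam^2) := by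
    rw [hSval, div_pow, mul_pow]
    gcongr
  calc c^j * |(∏ i ∈ range j, (1 - x i)) - (1 - ∑ i ∈ range j, x i)|
      ≤ c^j * ((∑ i ∈ range j, x i)^2/2) := mul_le_mul_of_nonneg_left key hcj
    _ ≤ c^j * ((((j:ℝ)+1)^4 / (c^2 * lam^2))/2) := mul_le_mul_of_nonneg_left (by linarith) hcj
    _ = ((j:ℝ)+1)^4 * c^j / (2 * c^2 * lam^2) := by ring


lemma rho_bounds (c mR : ℝ) (hc : 0 < c) (hc1 : c < 1) (hm1 : 1 ≤ mR) :
    0 ≤ (c+1/2)*(c+mR*(1-c))*(1-c) + (c*(1+c)+2*mR*c*(1-c)+mR^2*(1-c)^2)/2 ∧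
    (c+1/2)*(c+mR*(1-c))*(1-c) + (c*(1+c)+2*mR*c*(1-c)+mR^2*(1-c)^2)/2 ≤ 12*mR^2 := by
  have h1 : 0 < 1 - c := by linarith
  constructor
  · nlinarith [mul_pos hc h1, sq_nonneg (mR*(1-c)), mul_nonneg (mul_nonneg hc.le h1.le) (by linarith : (0:ℝ) ≤ mR)]
  · nlinarith [sq_nonneg (mR-1), sq_nonneg (mR*(1-c)), mul_pos hc h1, sq_nonneg (mR*(1-c)-1), mul_nonneg (mul_nonneg hc.le h1.le) (by linarith : (0:ℝ) ≤ mR), sq_nonneg mR, mul_le_mul_of_nonneg_left hc1.le (by linarith : (0:ℝ) ≤ mR)]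

set_option maxHeartbeats 2000000 in
/-- Fix `c ∈ (0,1)`. There are `C > 0` and `N` such that for every `n ≥ N` with
`m := cn` a positive integer,
`| ((m-1)!/(n+1)^(m-1))·Σ_{s=0}^{m-1} (n+1)^s/s! − (1/(1−c))·(1 + (c²−c−1)/(n(1−c)²)) | ≤ C/n²`. -/
theorem poisson_factor_asymptotics (c : ℝ) (hc : 0 < c) (hc1 : c < 1) :
    ∃ C > 0, ∃ N : ℕ, ∀ n : ℕ, N ≤ n → ∀ m : ℕ, 1 ≤ m → (m : ℝ) = c * n →
      |((m - 1).factorial : ℝ) / ((n : ℝ) + 1) ^ (m - 1) *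
            ∑ s ∈ Finset.range m, ((n : ℝ) + 1) ^ s / (s.factorial : ℝ)
          - 1 / (1 - c) * (1 + (c ^ 2 - c - 1) / ((n : ℝ) * (1 - c) ^ 2))|
        ≤ C / (n : ℝ) ^ 2 := by
  have hc1' : (0:ℝ) < 1 - c := by linarith
  have hcne : c ≠ 1 := ne_of_lt hc1
  set K1 := ∑' j : ℕ, ((j:ℝ)+1)^4 * c^j with hK1
  set J2 := ∑' j : ℕ, (j:ℝ)^2 * c^j with hJ2
  set J3 := ∑' j : ℕ, (j:ℝ)^3 * c^j with hJ3
  have hK1nn : 0 ≤ K1 := tsum_nonneg fun j => by positivity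
  have hJ2nn : 0 ≤ J2 := tsum_nonneg fun j => by positivity
  have hJ3nn : 0 ≤ J3 := tsum_nonneg fun j => by positivity
  refine ⟨K1/(2*c^2) + J2/(c^2*(1-c)) + 12*J3/(c^2*(1-c)^3) + 2/(1-c)^3, by positivity,
    1, fun n hn m hm hmc => ?_⟩
  have hn1 : (1:ℝ) ≤ (n:ℝ) := by exact_mod_cast hn
  have hn0 : (0:ℝ) < (n:ℝ) := by linarith
  set lam : ℝ := (n:ℝ) + 1 with hlamdef
  have hlam : 0 < lam := by positivity
  have hnlam : (n:ℝ) ≤ lam := by simp [hlamdef]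
  have hm1 : (1:ℝ) ≤ (m:ℝ) := by exact_mod_cast hm
  have hm0 : (0:ℝ) < (m:ℝ) := by linarith
  -- the variables x i
  set x : ℕ → ℝ := fun i => (c + 1 + (i:ℝ)) / (c * lam) with hxdef
  have hclam : 0 < c * lam := by positivity
  -- per-term representation
  have hterm : ∀ j ∈ range m, ((m - 1).descFactorial j : ℝ) / lam ^ j
      = c ^ j * ∏ i ∈ range j, (1 - x i) := by
    intro j hj
    rw [mem_range] at hj
    have hdesc : ((m-1).descFactorial j : ℝ) = ∏ i ∈ range j, ((m:ℝ) - 1 - (i:ℝ)) := by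
      rw [Nat.descFactorial_eq_prod_range, Nat.cast_prod]
      refine prod_congr rfl fun i hi => ?_
      rw [mem_range] at hi
      have : i ≤ m - 1 := by omega
      have h1m : 1 ≤ m := hm
      push_cast [Nat.cast_sub this, Nat.cast_sub h1m]
      ring
    have e1 : (∏ i ∈ range j, ((m:ℝ) - 1 - (i:ℝ))) / lam ^ j
        = ∏ i ∈ range j, (((m:ℝ) - 1 - (i:ℝ)) / lam) := by
      rw [prod_div_distrib, prod_const, card_range]
    have e2 : c ^ j * ∏ i ∈ range j, (1 - x i) = ∏ i ∈ range j, (c * (1 - x i)) := by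
      rw [prod_mul_distrib, prod_const, card_range]
    rw [hdesc, e1, e2]
    refine prod_congr rfl fun i hi => ?_
    have hlamne : lam ≠ 0 := ne_of_gt hlam
    have hcne0 : c ≠ 0 := ne_of_gt hc
    show ((m:ℝ) - 1 - (i:ℝ)) / lam = c * (1 - (c + 1 + (i:ℝ)) / (c * lam))
    field_simp
    rw [hmc, hlamdef]
    ring
  have hcne0 : c ≠ 0 := ne_of_gt hc
  have hlamne : lam ≠ 0 := ne_of_gt hlam
  have h1c : (1:ℝ) - c ≠ 0 := ne_of_gt hc1'
  have hnne : (n:ℝ) ≠ 0 := ne_of_gt hn0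
  have hc1ne : c - 1 ≠ 0 := fun h => hcne (by linarith)
  have hSval : ∀ j : ℕ, ∑ i ∈ range j, x i = ((j:ℝ)*(c+1) + (j:ℝ)*((j:ℝ)-1)/2) / (c*lam) := by
    intro j
    simp only [hxdef]
    rw [← sum_div, sum_lin]
  have hx0 : ∀ i, 0 ≤ x i := fun i => by rw [hxdef]; positivity
  have hx1 : ∀ i, i + 1 ≤ m → x i ≤ 1 := by
    intro i hi
    rw [hxdef, div_le_one hclam]
    have h1 : (i:ℝ) + 1 ≤ (m:ℝ) := by exact_mod_cast hi
    have h2 : c * lam = (m:ℝ) + c := by rw [hlamdef, hmc]; ring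
    linarith
  have habs : ∀ j ∈ range m,
      |((m - 1).descFactorial j : ℝ) / lam ^ j - c ^ j * (1 - ∑ i ∈ range j, x i)|
      ≤ ((j:ℝ)+1)^4 * c^j / (2 * c^2 * lam^2) := by
    intro j hj
    have hjm := mem_range.1 hj
    rw [hterm j hj]
    exact term_bound c lam hc hc1 hlam x j (fun i _ => hx0 i)
      (fun i hi => hx1 i (by omega)) (hSval j)
  -- T vs M
  have hTM : |(∑ j ∈ range m, ((m - 1).descFactorial j : ℝ) / lam ^ j)
      - ∑ j ∈ range m, c ^ j * (1 - ∑ i ∈ range j, x i)| ≤ K1 / (2*c^2) / (n:ℝ)^2 := by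
    rw [← sum_sub_distrib]
    refine (abs_sum_le_sum_abs _ _).trans ((sum_le_sum habs).trans ?_)
    rw [← sum_div]
    have h1 : ∑ j ∈ range m, ((j:ℝ)+1)^4 * c^j ≤ K1 :=
      Summable.sum_le_tsum _ (fun j _ => by positivity) (summable_shift c hc hc1 4)
    have hle : (n:ℝ)^2 ≤ lam^2 := by nlinarith
    calc (∑ j ∈ range m, ((j:ℝ)+1)^4 * c^j)/(2*c^2*lam^2) ≤ K1/(2*c^2*lam^2) := by gcongr
      _ ≤ K1 / (2*c^2) / (n:ℝ)^2 := by
          rw [div_div]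
          gcongr
  -- value of M
  set ρ : ℝ := (c+1/2)*(c+(m:ℝ)*(1-c))*(1-c)
      + (c*(1+c)+2*(m:ℝ)*c*(1-c)+(m:ℝ)^2*(1-c)^2)/2 with hρdef
  have hMval : ∑ j ∈ range m, c ^ j * (1 - ∑ i ∈ range j, x i)
      = 1/(1-c) - (1+c-c^2)/(lam*(1-c)^3) - c^m/(1-c) + c^m*ρ/(c*lam*(1-c)^3) := by
    have e1 : ∀ j ∈ range m, c ^ j * (1 - ∑ i ∈ range j, x i)
        = c^j - ((c+1/2)*((j:ℝ)*c^j) + ((j:ℝ)^2*c^j)/2)/(c*lam) := by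
      intro j _
      rw [hSval]
      field_simp
      ring
    rw [sum_congr rfl e1, sum_sub_distrib]
    have e2 : ∑ j ∈ range m, ((c+1/2)*((j:ℝ)*c^j) + ((j:ℝ)^2*c^j)/2)/(c*lam)
        = ((c+1/2)*(∑ j ∈ range m, (j:ℝ)*c^j) + (∑ j ∈ range m, (j:ℝ)^2*c^j)/2)/(c*lam) := by
      rw [← sum_div, sum_add_distrib, ← mul_sum, ← sum_div]
    rw [e2, sumP c hcne, sumQ c hcne, geom_sum_eq hcne, hρdef]
    field_simp
    ring
  obtain ⟨hρ0, hρb⟩ := rho_bounds c (m:ℝ) hc hc1 hm1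
  -- bounds on c^m
  have hmsq : (m:ℝ)^2 = c^2*(n:ℝ)^2 := by rw [hmc]; ring
  have hcm2 : c^m ≤ J2/(c^2*(n:ℝ)^2) := by
    rw [le_div_iff₀ (by positivity)]
    calc c^m * (c^2*(n:ℝ)^2) = (m:ℝ)^2 * c^m := by rw [hmsq]; ring
      _ ≤ J2 := pow_le_tsum c hc hc1 2 m
  have hcm3 : c^m * (m:ℝ)^2 ≤ J3/(c*(n:ℝ)) := by
    rw [le_div_iff₀ (by positivity)]
    calc c^m * (m:ℝ)^2 * (c*(n:ℝ)) = (m:ℝ)^3 * c^m := by rw [← hmc]; ring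
      _ ≤ J3 := pow_le_tsum c hc hc1 3 m
  -- M vs M0
  have hMM0 : |(∑ j ∈ range m, c ^ j * (1 - ∑ i ∈ range j, x i))
      - (1/(1-c) - (1+c-c^2)/(lam*(1-c)^3))|
      ≤ (J2/(c^2*(1-c)) + 12*J3/(c^2*(1-c)^3)) / (n:ℝ)^2 := by
    rw [hMval]
    have e : (1/(1-c) - (1+c-c^2)/(lam*(1-c)^3) - c^m/(1-c) + c^m*ρ/(c*lam*(1-c)^3))
        - (1/(1-c) - (1+c-c^2)/(lam*(1-c)^3))
        = -(c^m/(1-c)) + c^m*ρ/(c*lam*(1-c)^3) := by ring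
    rw [e]
    have hd1 : (0:ℝ) < c*lam*(1-c)^3 := by
      have := pow_pos hc1' 3
      positivity
    refine (abs_add_le _ _).trans ?_
    rw [abs_neg, abs_of_nonneg (div_nonneg (by positivity) hc1'.le),
      abs_of_nonneg (div_nonneg (mul_nonneg (by positivity) hρ0) hd1.le)]
    have b1 : c^m/(1-c) ≤ J2/(c^2*(1-c))/(n:ℝ)^2 := by
      have erw : J2/(c^2*(1-c))/(n:ℝ)^2 = (J2/(c^2*(n:ℝ)^2))/(1-c) := by
        rw [div_div, div_div]
        congr 1
        ring
      rw [erw]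
      exact div_le_div₀ (div_nonneg hJ2nn (by positivity)) hcm2 hc1' le_rfl
    have b2 : c^m*ρ/(c*lam*(1-c)^3) ≤ 12*J3/(c^2*(1-c)^3)/(n:ℝ)^2 := by
      have h1 : c^m*ρ ≤ 12*(J3/(c*(n:ℝ))) := by
        calc c^m*ρ ≤ c^m*(12*(m:ℝ)^2) := mul_le_mul_of_nonneg_left hρb (by positivity)
          _ = 12*(c^m*(m:ℝ)^2) := by ring
          _ ≤ 12*(J3/(c*(n:ℝ))) := by linarith
      have hnn : (0:ℝ) ≤ 12*(J3/(c*(n:ℝ))) := by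
        have : (0:ℝ) ≤ J3/(c*(n:ℝ)) := div_nonneg hJ3nn (by positivity)
        linarith
      have hd2 : (0:ℝ) < c*(n:ℝ)*(1-c)^3 := by
        have := pow_pos hc1' 3
        positivity
      have hdd : c*(n:ℝ)*(1-c)^3 ≤ c*lam*(1-c)^3 :=
        mul_le_mul_of_nonneg_right (mul_le_mul_of_nonneg_left hnlam hc.le) (pow_pos hc1' 3).le
      have hρnn : 0 ≤ c^m*ρ := mul_nonneg (by positivity) hρ0
      calc c^m*ρ/(c*lam*(1-c)^3) ≤ (12*(J3/(c*(n:ℝ))))/(c*(n:ℝ)*(1-c)^3) :=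
            div_le_div₀ hnn h1 hd2 hdd
          _ = 12*J3/(c^2*(1-c)^3)/(n:ℝ)^2 := by
            field_simp
            try ring
            try exact Or.inl trivial
    have hsplit : (J2/(c^2*(1-c)) + 12*J3/(c^2*(1-c)^3))/(n:ℝ)^2
        = J2/(c^2*(1-c))/(n:ℝ)^2 + 12*J3/(c^2*(1-c)^3)/(n:ℝ)^2 := by
      rw [add_div]
    rw [hsplit]
    linarith
  -- M0 vs target
  have hM0T : |(1/(1-c) - (1+c-c^2)/(lam*(1-c)^3))
      - 1/(1-c)*(1+(c^2-c-1)/((n:ℝ)*(1-c)^2))| ≤ 2/(1-c)^3/(n:ℝ)^2 := by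
    have e : (1/(1-c) - (1+c-c^2)/(lam*(1-c)^3))
        - 1/(1-c)*(1+(c^2-c-1)/((n:ℝ)*(1-c)^2))
        = (1+c-c^2)/((n:ℝ)*lam*(1-c)^3) := by
      rw [hlamdef]
      field_simp
      ring
    have h2c : 1+c-c^2 ≤ 2 := by nlinarith
    have h2c0 : (0:ℝ) ≤ 1+c-c^2 := by nlinarith
    have hd3 : (0:ℝ) < (n:ℝ)*lam*(1-c)^3 := by
      have := pow_pos hc1' 3
      positivity
    rw [e, abs_of_nonneg (div_nonneg h2c0 hd3.le), div_div,
      div_le_div_iff₀ hd3 (by positivity : (0:ℝ) < (1-c)^3*(n:ℝ)^2)]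
    have h3 : (0:ℝ) < (1-c)^3 := pow_pos hc1' 3
    nlinarith [mul_nonneg (mul_nonneg h3.le (sq_nonneg (n:ℝ))) (by linarith : (0:ℝ) ≤ 2-(1+c-c^2)), mul_pos (mul_pos hn0 hlam) h3]
  -- assemble
  rw [stepA m hm lam hlam]
  set T := ∑ j ∈ range m, ((m - 1).descFactorial j : ℝ) / lam ^ j
  set M := ∑ j ∈ range m, c ^ j * (1 - ∑ i ∈ range j, x i)
  set M0 := 1/(1-c) - (1+c-c^2)/(lam*(1-c)^3)
  set Tg := 1/(1-c)*(1+(c^2-c-1)/((n:ℝ)*(1-c)^2))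
  calc |T - Tg| ≤ |T - M| + |M - Tg| := abs_sub_le _ _ _
    _ ≤ |T - M| + (|M - M0| + |M0 - Tg|) := by linarith [abs_sub_le M M0 Tg]
    _ ≤ K1/(2*c^2)/(n:ℝ)^2 + ((J2/(c^2*(1-c)) + 12*J3/(c^2*(1-c)^3))/(n:ℝ)^2
        + 2/(1-c)^3/(n:ℝ)^2) := by
      have := add_le_add hTM (add_le_add hMM0 hM0T)
      linarith
    _ = (K1/(2*c^2) + J2/(c^2*(1-c)) + 12*J3/(c^2*(1-c)^3) + 2/(1-c)^3) / (n:ℝ)^2 := by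
      ring
end
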